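/- arXiv:1108.3802 — 7 statements merged into one kernel-verified Lean document; each statement's English description precedes it below -/
import Mathlib

section
/- Let n₁, n₂, n₃ be nonzero integers with |n₁|, |n₂|, |n₃| pairwise distinct and gcd(n₁,n₂,n₃) = 1, let m = gcd(n₂,n₃), and let r be a positive integer. Then sup_{(x,y)∈ℝ²} F(x,y) ≥ |n₃| / (2·(r·(|n₂|+|n₃|) + m·(|n₁|+|n₃|))). -/
/-- `Δ(y,t) = y - t·m/n₃`. -/
noncomputable def Delta (n₃ m : ℤ) (y : ℝ) (t : ℤ) : ℝ :=
  y - (t : ℝ) * (m : ℝ) / (n₃ : ℝ)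

/-- `Γ(x,y,s,t) = (x - r·y/m) - s/m + (r/m)·Δ(y,t)`. -/
noncomputable def Gamma (n₃ r m : ℤ) (x y : ℝ) (s t : ℤ) : ℝ :=
  (x - (r : ℝ) * y / (m : ℝ)) - (s : ℝ) / (m : ℝ) + ((r : ℝ) / (m : ℝ)) * Delta n₃ m y t

/-- `F(x,y) = inf_{s,t ∈ ℤ} max` of the three quantities from the Hare–Ramsey reduction. -/
noncomputable def Fval (n₁ n₂ n₃ r m : ℤ) (x y : ℝ) : ℝ :=
  ⨅ st : ℤ × ℤ,
    max (max ((|(n₃ : ℝ)| / (|(n₂ : ℝ)| + |(n₃ : ℝ)|)) * |Delta n₃ m y st.2|)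
          ((|(n₃ : ℝ)| / (|(n₁ : ℝ)| + |(n₃ : ℝ)|)) * |Gamma n₃ r m x y st.1 st.2|))
      (|(n₂ : ℝ) * Gamma n₃ r m x y st.1 st.2 - (n₁ : ℝ) * Delta n₃ m y st.2| /
        (|(n₁ : ℝ)| + |(n₂ : ℝ)|))

/-- The key algebraic simplification: `Γ(x,y,s,t) = x - r·t/n₃ - s/m`. -/
lemma Gamma_eq (n₃ r m : ℤ) (hn₃ : (n₃ : ℝ) ≠ 0) (hm : (m : ℝ) ≠ 0) (x y : ℝ) (s t : ℤ) :
    Gamma n₃ r m x y s t = x - (r : ℝ) * t / (n₃ : ℝ) - (s : ℝ) / (m : ℝ) := by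
  unfold Gamma Delta
  field_simp
  ring

set_option maxHeartbeats 1000000 in
theorem lower_bound_sup_F (n₁ n₂ n₃ : ℤ) (hn₁ : n₁ ≠ 0) (hn₂ : n₂ ≠ 0) (hn₃ : n₃ ≠ 0)
    (h12 : |n₁| ≠ |n₂|) (h13 : |n₁| ≠ |n₃|) (h23 : |n₂| ≠ |n₃|)
    (hgcd : Int.gcd n₁ (Int.gcd n₂ n₃) = 1)
    (m : ℤ) (hm : m = Int.gcd n₂ n₃) (r : ℤ) (hr : 0 < r) :
    (⨆ p : ℝ × ℝ, Fval n₁ n₂ n₃ r m p.1 p.2) ≥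
      |(n₃ : ℝ)| /
        (2 * ((r : ℝ) * (|(n₂ : ℝ)| + |(n₃ : ℝ)|) + (m : ℝ) * (|(n₁ : ℝ)| + |(n₃ : ℝ)|))) := by
  -- Abbreviations
  set a1 : ℝ := |(n₁ : ℝ)| with ha1
  set a2 : ℝ := |(n₂ : ℝ)| with ha2
  set a3 : ℝ := |(n₃ : ℝ)| with ha3
  have hmpos : (0 : ℤ) < m := by
    rw [hm]
    exact_mod_cast Int.gcd_pos_of_ne_zero_left n₃ hn₂
  have hm1 : (1 : ℝ) ≤ (m : ℝ) := by exact_mod_cast hmpos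
  have hmR : (0 : ℝ) < (m : ℝ) := by linarith
  have hmne : (m : ℝ) ≠ 0 := ne_of_gt hmR
  have hr1 : (1 : ℝ) ≤ (r : ℝ) := by exact_mod_cast hr
  have hrR : (0 : ℝ) < (r : ℝ) := by linarith
  have hn₃R : (n₃ : ℝ) ≠ 0 := by exact_mod_cast hn₃
  have ha1p : (1 : ℝ) ≤ a1 := by
    rw [ha1]; exact_mod_cast Int.one_le_abs hn₁
  have ha2p : (1 : ℝ) ≤ a2 := by
    rw [ha2]; exact_mod_cast Int.one_le_abs hn₂
  have ha3p : (1 : ℝ) ≤ a3 := by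
    rw [ha3]; exact_mod_cast Int.one_le_abs hn₃
  set A : ℝ := a2 + a3 with hA
  set B : ℝ := a1 + a3 with hB
  have hApos : (0 : ℝ) < A := by simp only [hA]; linarith
  have hBpos : (0 : ℝ) < B := by simp only [hB]; linarith
  set D : ℝ := 2 * ((r : ℝ) * A + (m : ℝ) * B) with hD
  have hDpos : (0 : ℝ) < D := by
    have : (0:ℝ) < (r:ℝ) * A := mul_pos hrR hApos
    have : (0:ℝ) < (m:ℝ) * B := mul_pos hmR hBpos
    simp only [hD]; nlinarith [mul_pos hrR hApos]
  set c : ℝ := a3 / D with hc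
  have hcD : c * D = a3 := div_mul_cancel₀ a3 (ne_of_gt hDpos)
  have hcpos : (0 : ℝ) < c := div_pos (by linarith) hDpos
  -- The function whose infimum is Fval, at the witness point (1/(2m), 0)
  -- Lower bound at the witness point
  have key : c ≤ Fval n₁ n₂ n₃ r m (1 / (2 * (m : ℝ))) 0 := by
    apply le_ciInf
    rintro ⟨s, t⟩
    simp only
    set G : ℝ := Gamma n₃ r m (1 / (2 * (m : ℝ))) 0 s t with hG
    have hGval : G = 1 / (2 * (m : ℝ)) - (r : ℝ) * t / (n₃ : ℝ) - (s : ℝ) / (m : ℝ) :=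
      Gamma_eq n₃ r m hn₃R hmne _ _ s t
    have hDelta : |Delta n₃ m 0 t| = |(t : ℝ)| * (m : ℝ) / a3 := by
      unfold Delta
      rw [zero_sub, abs_neg, abs_div, abs_mul, abs_of_pos hmR, ha3]
    refine le_trans ?_ (le_max_left _ _)
    by_cases hcase : c * A ≤ (m : ℝ) * |(t : ℝ)|
    · -- first term is large
      refine le_trans ?_ (le_max_left _ _)
      rw [hDelta]
      have ha3pos : (0:ℝ) < a3 := by linarith
      have e : a3 / A * (|(t : ℝ)| * (m : ℝ) / a3) = |(t : ℝ)| * (m : ℝ) / A := by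
        field_simp
      rw [e, le_div_iff₀ hApos]
      linarith
    · -- second term is large
      push_neg at hcase
      refine le_trans ?_ (le_max_right _ _)
      have ha3pos : (0:ℝ) < a3 := by linarith
      set T : ℝ := |(t : ℝ)| with hT
      have hTnn : (0:ℝ) ≤ T := abs_nonneg _
      -- |G| ≥ 1/(2m) - r·T/a3
      have hodd : (1 : ℝ) ≤ |1 - 2 * (s : ℝ)| := by
        have h1 : (1 - 2 * s : ℤ) ≠ 0 := by omega
        have h2 := Int.one_le_abs h1
        calc (1:ℝ) ≤ |((1 - 2*s : ℤ) : ℝ)| := by exact_mod_cast h2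
          _ = |1 - 2 * (s:ℝ)| := by push_cast; ring_nf
      have hsplit : G = (1 / (2 * (m : ℝ)) - (s : ℝ) / (m : ℝ)) - (r : ℝ) * t / (n₃ : ℝ) := by
        rw [hGval]; ring
      have hfirst : |1 / (2 * (m : ℝ)) - (s : ℝ) / (m : ℝ)| = |1 - 2 * (s:ℝ)| / (2 * (m:ℝ)) := by
        have e : 1 / (2 * (m : ℝ)) - (s : ℝ) / (m : ℝ) = (1 - 2 * (s:ℝ)) / (2 * (m:ℝ)) := by
          field_simp
        rw [e, abs_div, abs_of_pos (show (0:ℝ) < 2 * (m:ℝ) by positivity)]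
      have hsecond : |(r : ℝ) * t / (n₃ : ℝ)| = (r : ℝ) * T / a3 := by
        rw [abs_div, abs_mul, abs_of_pos hrR, ha3, hT]
      have hGlb : |1 - 2 * (s:ℝ)| / (2 * (m:ℝ)) - (r : ℝ) * T / a3 ≤ |G| := by
        rw [hsplit, ← hfirst, ← hsecond]
        exact abs_sub_abs_le_abs_sub _ _
      have hmono : 1 / (2 * (m:ℝ)) ≤ |1 - 2 * (s:ℝ)| / (2 * (m:ℝ)) := by gcongr
      have hGlb2 : 1 / (2 * (m:ℝ)) - (r : ℝ) * T / a3 ≤ |G| := by linarith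
      have f1' : a3 - 2 * (m:ℝ) * (r:ℝ) * T ≤ 2 * (m:ℝ) * a3 * |G| := by
        have h := mul_le_mul_of_nonneg_left hGlb2 (show (0:ℝ) ≤ 2 * (m:ℝ) * a3 by positivity)
        have e : 2 * (m:ℝ) * a3 * (1 / (2 * (m:ℝ)) - (r : ℝ) * T / a3)
            = a3 - 2 * (m:ℝ) * (r:ℝ) * T := by
          field_simp
        linarith [e ▸ h]
      have hD' : a3 = 2 * c * ((r:ℝ) * A + (m:ℝ) * B) := by
        rw [← hcD, hD]; ring
      have hmul : (r:ℝ) * ((m : ℝ) * T) < (r:ℝ) * (c * A) :=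
        mul_lt_mul_of_pos_left hcase hrR
      have h1 : c * B ≤ a3 * |G| := by
        have h2 : c * B * (2 * (m:ℝ)) ≤ a3 * |G| * (2 * (m:ℝ)) := by linarith
        exact le_of_mul_le_mul_right h2 (by positivity)
      rw [div_mul_eq_mul_div, le_div_iff₀ hBpos]
      linarith
  -- Boundedness above of the range of Fval
  have hbdd : BddAbove (Set.range fun p : ℝ × ℝ => Fval n₁ n₂ n₃ r m p.1 p.2) := by
    refine ⟨(m : ℝ) + 1, ?_⟩
    rintro z ⟨⟨x, y⟩, rfl⟩
    simp only
    set t₀ : ℤ := round (y * (n₃ : ℝ) / (m : ℝ)) with ht₀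
    set s₀ : ℤ := round ((x - (r : ℝ) * t₀ / (n₃ : ℝ)) * (m : ℝ)) with hs₀
    have hbelow : BddBelow (Set.range fun st : ℤ × ℤ =>
        max (max ((a3 / A) * |Delta n₃ m y st.2|)
          ((a3 / B) * |Gamma n₃ r m x y st.1 st.2|))
        (|(n₂ : ℝ) * Gamma n₃ r m x y st.1 st.2 - (n₁ : ℝ) * Delta n₃ m y st.2| / (a1 + a2))) := by
      refine ⟨0, ?_⟩
      rintro z ⟨st, rfl⟩
      simp only
      refine le_trans ?_ (le_max_right _ _)
      positivity
    have hstep : Fval n₁ n₂ n₃ r m x y ≤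
        max (max ((a3 / A) * |Delta n₃ m y t₀|)
          ((a3 / B) * |Gamma n₃ r m x y s₀ t₀|))
        (|(n₂ : ℝ) * Gamma n₃ r m x y s₀ t₀ - (n₁ : ℝ) * Delta n₃ m y t₀| / (a1 + a2)) := by
      exact ciInf_le hbelow (s₀, t₀)
    refine le_trans hstep ?_
    have hDb : |Delta n₃ m y t₀| ≤ (m : ℝ) / (2 * a3) := by
      have ha3pos : (0:ℝ) < a3 := by linarith
      have : Delta n₃ m y t₀ = ((m : ℝ) / (n₃ : ℝ)) * (y * (n₃ : ℝ) / (m : ℝ) - t₀) := by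
        unfold Delta; field_simp
      rw [this, abs_mul, abs_div, abs_of_pos hmR, ← ha3]
      have h2 : |y * (n₃ : ℝ) / (m : ℝ) - (t₀ : ℝ)| ≤ 1 / 2 := abs_sub_round _
      calc (m:ℝ) / a3 * |y * (n₃ : ℝ) / (m : ℝ) - (t₀ : ℝ)| ≤ (m:ℝ) / a3 * (1/2) := by
            exact mul_le_mul_of_nonneg_left h2 (by positivity)
        _ = (m : ℝ) / (2 * a3) := by ring
    have hGb : |Gamma n₃ r m x y s₀ t₀| ≤ 1 / (2 * (m : ℝ)) := by
      have : Gamma n₃ r m x y s₀ t₀ =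
          (1 / (m : ℝ)) * ((x - (r : ℝ) * t₀ / (n₃ : ℝ)) * (m : ℝ) - s₀) := by
        rw [Gamma_eq n₃ r m hn₃R hmne, mul_sub, mul_comm ((1:ℝ) / (m:ℝ)), mul_one_div,
          mul_div_assoc, mul_div_cancel_right₀ _ hmne, one_div_mul_eq_div]
      rw [this, abs_mul, abs_of_pos (show (0:ℝ) < 1 / (m:ℝ) by positivity)]
      have h2 : |(x - (r : ℝ) * t₀ / (n₃ : ℝ)) * (m : ℝ) - (s₀ : ℝ)| ≤ 1 / 2 := abs_sub_round _
      calc 1 / (m:ℝ) * |(x - (r : ℝ) * t₀ / (n₃ : ℝ)) * (m : ℝ) - (s₀ : ℝ)|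
            ≤ 1 / (m:ℝ) * (1/2) := mul_le_mul_of_nonneg_left h2 (by positivity)
        _ = 1 / (2 * (m : ℝ)) := by ring
    have ha3pos : (0:ℝ) < a3 := by linarith
    refine max_le (max_le ?_ ?_) ?_
    · have hfrac : a3 / A ≤ 1 := by rw [div_le_one hApos]; simp only [hA]; linarith
      have : a3 / A * |Delta n₃ m y t₀| ≤ 1 * ((m : ℝ) / (2 * a3)) :=
        mul_le_mul hfrac hDb (abs_nonneg _) zero_le_one
      have h2 : (m : ℝ) / (2 * a3) ≤ (m : ℝ) := by
        rw [div_le_iff₀ (by positivity)]; nlinarith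
      linarith
    · have hfrac : a3 / B ≤ 1 := by rw [div_le_one hBpos]; simp only [hB]; linarith
      have : a3 / B * |Gamma n₃ r m x y s₀ t₀| ≤ 1 * (1 / (2 * (m:ℝ))) :=
        mul_le_mul hfrac hGb (abs_nonneg _) zero_le_one
      have h2 : 1 / (2 * (m:ℝ)) ≤ 1 := by rw [div_le_one (by positivity)]; linarith
      linarith
    · have hnum : |(n₂ : ℝ) * Gamma n₃ r m x y s₀ t₀ - (n₁ : ℝ) * Delta n₃ m y t₀|
          ≤ a2 * 1 + a1 * (m : ℝ) := by
        calc |(n₂ : ℝ) * Gamma n₃ r m x y s₀ t₀ - (n₁ : ℝ) * Delta n₃ m y t₀|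
            ≤ |(n₂ : ℝ) * Gamma n₃ r m x y s₀ t₀| + |(n₁ : ℝ) * Delta n₃ m y t₀| :=
              abs_sub _ _
          _ = a2 * |Gamma n₃ r m x y s₀ t₀| + a1 * |Delta n₃ m y t₀| := by
              rw [abs_mul, abs_mul, ← ha1, ← ha2]
          _ ≤ a2 * 1 + a1 * (m : ℝ) := by
              have hG1 : |Gamma n₃ r m x y s₀ t₀| ≤ 1 := by
                refine le_trans hGb ?_
                rw [div_le_one (by positivity)]; linarith
              have hD1 : |Delta n₃ m y t₀| ≤ (m : ℝ) := by
                refine le_trans hDb ?_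
                rw [div_le_iff₀ (by positivity)]; nlinarith
              have := mul_le_mul_of_nonneg_left hG1 (show (0:ℝ) ≤ a2 by linarith)
              have := mul_le_mul_of_nonneg_left hD1 (show (0:ℝ) ≤ a1 by linarith)
              linarith
      rw [div_le_iff₀ (show (0:ℝ) < a1 + a2 by linarith)]
      nlinarith
  -- Conclude
  have final : Fval n₁ n₂ n₃ r m (1 / (2 * (m : ℝ))) 0 ≤
      ⨆ p : ℝ × ℝ, Fval n₁ n₂ n₃ r m p.1 p.2 :=
    le_ciSup hbdd ((1 / (2 * (m : ℝ)), 0) : ℝ × ℝ)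
  exact le_trans key final
end

section
/- Let n₁, n₂, n₃ be nonzero integers with |n₁|, |n₂|, |n₃| pairwise distinct and gcd(n₁,n₂,n₃) = 1, let m = gcd(n₂,n₃), and let r be a positive integer. Set E₁ = max( m/(2(|n₂|+|n₃|)), r/(2(|n₁|+|n₃|)), (|n₃|+2rm)/(2(r(|n₂|+|n₃|)+m(|n₁|+|n₃|))) ). Then sup_{(x,y)∈ℝ²} F(x,y) ≤ E₁·(2|n₁||n₂| + |n₃|·(|n₁|+|n₂|)) / (|n₃|·(|n₁|+|n₂|)). -/
lemma Fval_le (n₁ n₂ n₃ r m : ℤ) (x y : ℝ) (s t : ℤ) :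
    Fval n₁ n₂ n₃ r m x y ≤
      max (max ((|(n₃ : ℝ)| / (|(n₂ : ℝ)| + |(n₃ : ℝ)|)) * |Delta n₃ m y t|)
          ((|(n₃ : ℝ)| / (|(n₁ : ℝ)| + |(n₃ : ℝ)|)) * |Gamma n₃ r m x y s t|))
        (|(n₂ : ℝ) * Gamma n₃ r m x y s t - (n₁ : ℝ) * Delta n₃ m y t| /
          (|(n₁ : ℝ)| + |(n₂ : ℝ)|)) := by
  unfold Fval
  refine ciInf_le ⟨0, ?_⟩ (s, t)
  rintro z ⟨st, rfl⟩
  exact le_max_of_le_right (by positivity)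

lemma key_cover (A P Q X Y : ℝ) (hA : 0 < A) (hP : 1/2 ≤ P) (hQ : A/2 ≤ Q)
    (h3 : 1/2 ≤ A*(P-1) + Q) :
    ∃ t n : ℤ, |(t:ℝ) - Y| ≤ P ∧ |(t:ℝ)*A - X - n| ≤ Q := by
  have hQ0 : 0 ≤ Q := le_trans (by positivity) hQ
  set T : ℤ := ⌈Y - P⌉ with hT
  set M : ℤ := ⌊Y + P⌋ with hM
  have hTle : (T:ℝ) < Y - P + 1 := Int.ceil_lt_add_one _
  have hTge : Y - P ≤ (T:ℝ) := Int.le_ceil _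
  have hMge : Y + P - 1 < (M:ℝ) := Int.sub_one_lt_floor _
  have hMle : (M:ℝ) ≤ Y + P := Int.floor_le _
  have hTM : T ≤ M := Int.le_floor.mpr (by linarith)
  have hMT : 2*P - 2 ≤ ((M:ℝ) - (T:ℝ)) := by linarith
  set n : ℤ := ⌈(T:ℝ)*A - Q - X⌉ with hn
  set w : ℝ := X + n - T*A with hw
  have hw1 : -Q ≤ w := by
    have := Int.le_ceil ((T:ℝ)*A - Q - X); rw [← hn] at this
    simp only [hw]; linarith
  have hw2 : w < -Q + 1 := by
    have := Int.ceil_lt_add_one ((T:ℝ)*A - Q - X); rw [← hn] at this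
    simp only [hw]; linarith
  have hMTA : (2*P-2)*A ≤ ((M:ℝ) - (T:ℝ))*A := mul_le_mul_of_nonneg_right hMT hA.le
  have hw3 : w ≤ ((M:ℝ) - (T:ℝ))*A + Q := by nlinarith
  set j₀ : ℤ := ⌊w/A + 1/2⌋ with hj₀
  have hf1 : (j₀:ℝ) ≤ w/A + 1/2 := Int.floor_le _
  have hf2 : w/A + 1/2 < (j₀:ℝ) + 1 := Int.lt_floor_add_one _
  have hdivA : (w/A)*A = w := div_mul_cancel₀ w hA.ne'
  by_cases hc1 : j₀ ≤ 0
  · -- take t = T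
    refine ⟨T, n, ?_, ?_⟩
    · rw [abs_le]; constructor <;> linarith
    · have hj0R : (j₀:ℝ) ≤ 0 := by exact_mod_cast hc1
      have hwd : w/A < 1/2 := by linarith
      have hwA : w < (1/2)*A := by
        calc w = (w/A)*A := hdivA.symm
        _ < (1/2)*A := mul_lt_mul_of_pos_right hwd hA
      have he : (T:ℝ)*A - X - n = -w := by simp only [hw]; ring
      rw [he, abs_neg, abs_le]; constructor <;> linarith
  · push_neg at hc1
    by_cases hc2 : M - T ≤ j₀
    · -- take t = M
      refine ⟨M, n, ?_, ?_⟩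
      · rw [abs_le]; constructor <;> linarith
      · have hcast : ((M:ℝ) - (T:ℝ)) ≤ (j₀:ℝ) := by
          have : ((M - T : ℤ):ℝ) ≤ (j₀:ℝ) := by exact_mod_cast hc2
          push_cast at this; linarith
        have h1 : ((M:ℝ) - (T:ℝ)) ≤ w/A + 1/2 := le_trans hcast hf1
        have h2 : ((M:ℝ) - (T:ℝ))*A ≤ (w/A + 1/2)*A := mul_le_mul_of_nonneg_right h1 hA.le
        rw [add_mul, hdivA] at h2
        have he : (M:ℝ)*A - X - n = ((M:ℝ) - (T:ℝ))*A - w := by simp only [hw]; ring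
        rw [he, abs_le]; constructor <;> linarith
    · -- take t = T + j₀
      push_neg at hc2
      refine ⟨T + j₀, n, ?_, ?_⟩
      · have h1 : (1:ℝ) ≤ (j₀:ℝ) := by exact_mod_cast hc1
        have h2 : ((T + j₀ : ℤ):ℝ) ≤ (M:ℝ) - 1 := by
          have : T + j₀ + 1 ≤ M := by omega
          have := (by exact_mod_cast this : ((T + j₀ + 1 : ℤ):ℝ) ≤ (M:ℝ))
          push_cast at this ⊢; linarith
        push_cast
        rw [abs_le]; constructor <;> push_cast at h2 ⊢ <;> linarith
      · have h2 : (j₀:ℝ)*A ≤ (w/A + 1/2)*A := mul_le_mul_of_nonneg_right hf1 hA.le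
        have h3' : (w/A)*A < ((j₀:ℝ) + 1/2)*A := mul_lt_mul_of_pos_right (by linarith) hA
        rw [add_mul, hdivA] at h2
        rw [hdivA] at h3'
        have he : ((T + j₀ : ℤ):ℝ)*A - X - n = (j₀:ℝ)*A - w := by
          push_cast; simp only [hw]; ring
        rw [he, abs_le]; constructor <;> nlinarith

set_option maxHeartbeats 2000000 in
theorem upper_bound_sup_F (n₁ n₂ n₃ : ℤ) (hn₁ : n₁ ≠ 0) (hn₂ : n₂ ≠ 0) (hn₃ : n₃ ≠ 0)
    (h12 : |n₁| ≠ |n₂|) (h13 : |n₁| ≠ |n₃|) (h23 : |n₂| ≠ |n₃|)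
    (hgcd : Int.gcd n₁ (Int.gcd n₂ n₃) = 1)
    (m : ℤ) (hm : m = Int.gcd n₂ n₃) (r : ℤ) (hr : 0 < r)
    (E₁ : ℝ)
    (hE₁ : E₁ = max (max ((m : ℝ) / (2 * (|(n₂ : ℝ)| + |(n₃ : ℝ)|)))
            ((r : ℝ) / (2 * (|(n₁ : ℝ)| + |(n₃ : ℝ)|))))
          ((|(n₃ : ℝ)| + 2 * (r : ℝ) * (m : ℝ)) /
            (2 * ((r : ℝ) * (|(n₂ : ℝ)| + |(n₃ : ℝ)|) + (m : ℝ) * (|(n₁ : ℝ)| + |(n₃ : ℝ)|))))) :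
    (⨆ p : ℝ × ℝ, Fval n₁ n₂ n₃ r m p.1 p.2) ≤
      E₁ * (2 * |(n₁ : ℝ)| * |(n₂ : ℝ)| + |(n₃ : ℝ)| * (|(n₁ : ℝ)| + |(n₂ : ℝ)|)) /
        (|(n₃ : ℝ)| * (|(n₁ : ℝ)| + |(n₂ : ℝ)|)) := by
  set a₁ : ℝ := |(n₁ : ℝ)| with ha₁
  set a₂ : ℝ := |(n₂ : ℝ)| with ha₂
  set a₃ : ℝ := |(n₃ : ℝ)| with ha₃
  clear_value a₁ a₂ a₃
  have h1pos : (0:ℝ) < a₁ := ha₁ ▸ abs_pos.mpr (Int.cast_ne_zero.mpr hn₁)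
  have h2pos : (0:ℝ) < a₂ := ha₂ ▸ abs_pos.mpr (Int.cast_ne_zero.mpr hn₂)
  have h3pos : (0:ℝ) < a₃ := ha₃ ▸ abs_pos.mpr (Int.cast_ne_zero.mpr hn₃)
  have hmZ : (1:ℤ) ≤ m := by
    rw [hm]; exact_mod_cast Int.gcd_pos_iff.mpr (Or.inl hn₂)
  have hmR : (0:ℝ) < (m:ℝ) := by exact_mod_cast lt_of_lt_of_le Int.zero_lt_one hmZ
  have hrR : (0:ℝ) < (r:ℝ) := by exact_mod_cast hr
  have hmne : (m:ℝ) ≠ 0 := hmR.ne'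
  have hn₃R : (n₃:ℝ) ≠ 0 := Int.cast_ne_zero.mpr hn₃
  -- bounds on E₁
  have hEa : (m:ℝ)/(2*(a₂+a₃)) ≤ E₁ := by rw [hE₁]; exact le_max_of_le_left (le_max_left _ _)
  have hEb : (r:ℝ)/(2*(a₁+a₃)) ≤ E₁ := by rw [hE₁]; exact le_max_of_le_left (le_max_right _ _)
  have hEc : (a₃ + 2*(r:ℝ)*(m:ℝ))/(2*((r:ℝ)*(a₂+a₃)+(m:ℝ)*(a₁+a₃))) ≤ E₁ := by
    rw [hE₁]; exact le_max_right _ _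
  have hE₁pos : 0 < E₁ := lt_of_lt_of_le (by positivity) hEa
  set ρu : ℝ := E₁*(a₂+a₃)/a₃ with hρu
  set ρv : ℝ := E₁*(a₁+a₃)/a₃ with hρv
  clear_value ρu ρv
  have eu : a₃*ρu = E₁*(a₂+a₃) := by rw [hρu]; field_simp
  have ev : a₃*ρv = E₁*(a₁+a₃) := by rw [hρv]; field_simp
  have hu : (m:ℝ)/(2*a₃) ≤ ρu := by
    rw [div_le_iff₀ (by positivity)]
    have := (div_le_iff₀ (by positivity : (0:ℝ) < 2*(a₂+a₃))).mp hEa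
    nlinarith
  have hv : (r:ℝ)/(2*a₃) ≤ ρv := by
    rw [div_le_iff₀ (by positivity)]
    have := (div_le_iff₀ (by positivity : (0:ℝ) < 2*(a₁+a₃))).mp hEb
    nlinarith
  have h3' : 1/2 + (r:ℝ)*(m:ℝ)/a₃ ≤ (r:ℝ)*ρu + (m:ℝ)*ρv := by
    have hc := (div_le_iff₀ (by positivity : (0:ℝ) < 2*((r:ℝ)*(a₂+a₃)+(m:ℝ)*(a₁+a₃)))).mp hEc
    have e3 : a₃*((r:ℝ)*ρu + (m:ℝ)*ρv) = E₁*((r:ℝ)*(a₂+a₃)+(m:ℝ)*(a₁+a₃)) := by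
      rw [hρu, hρv]; field_simp
    rw [← mul_le_mul_iff_right₀ h3pos]
    have eL : a₃*(1/2 + (r:ℝ)*(m:ℝ)/a₃) = a₃/2 + (r:ℝ)*(m:ℝ) := by field_simp
    rw [eL, e3]; linarith
  -- the RHS value
  set B : ℝ := E₁ * (2*a₁*a₂ + a₃*(a₁+a₂)) / (a₃*(a₁+a₂)) with hB
  clear_value B
  have hEB : E₁ ≤ B := by
    rw [hB, le_div_iff₀ (by positivity)]
    nlinarith [mul_pos (mul_pos hE₁pos h1pos) h2pos]
  refine ciSup_le ?_
  rintro ⟨x, y⟩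
  simp only
  -- main per-point bound, given good s t
  have final : ∀ s t : ℤ, |Delta n₃ m y t| ≤ ρu → |Gamma n₃ r m x y s t| ≤ ρv →
      Fval n₁ n₂ n₃ r m x y ≤ B := by
    intro s t hΔ hΓ
    have h1 := Fval_le n₁ n₂ n₃ r m x y s t
    rw [← ha₁, ← ha₂, ← ha₃] at h1
    refine le_trans h1 (max_le (max_le ?_ ?_) ?_)
    · refine le_trans ?_ hEB
      rw [div_mul_eq_mul_div, div_le_iff₀ (by positivity)]
      nlinarith [mul_le_mul_of_nonneg_left hΔ h3pos.le, eu]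
    · refine le_trans ?_ hEB
      rw [div_mul_eq_mul_div, div_le_iff₀ (by positivity)]
      nlinarith [mul_le_mul_of_nonneg_left hΓ h3pos.le, ev]
    · rw [hB, div_le_div_iff₀ (by positivity) (by positivity)]
      have hnum : |(n₂:ℝ) * Gamma n₃ r m x y s t - (n₁:ℝ) * Delta n₃ m y t| ≤ a₂*ρv + a₁*ρu := by
        calc |(n₂:ℝ) * Gamma n₃ r m x y s t - (n₁:ℝ) * Delta n₃ m y t|
            ≤ |(n₂:ℝ) * Gamma n₃ r m x y s t| + |(n₁:ℝ) * Delta n₃ m y t| := abs_sub _ _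
          _ = a₂ * |Gamma n₃ r m x y s t| + a₁ * |Delta n₃ m y t| := by
              rw [abs_mul, abs_mul, ← ha₁, ← ha₂]
          _ ≤ a₂*ρv + a₁*ρu := by
              have := mul_le_mul_of_nonneg_left hΓ h2pos.le
              have := mul_le_mul_of_nonneg_left hΔ h1pos.le
              linarith
      have hid : (a₂*ρv + a₁*ρu)*(a₃*(a₁+a₂)) = E₁*(2*a₁*a₂ + a₃*(a₁+a₂))*(a₁+a₂) := by
        have : (a₂*ρv + a₁*ρu)*(a₃*(a₁+a₂)) = (a₂*(a₃*ρv) + a₁*(a₃*ρu))*(a₁+a₂) := by ring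
        rw [this, eu, ev]; ring
      linarith [mul_le_mul_of_nonneg_right hnum (by positivity : (0:ℝ) ≤ a₃*(a₁+a₂)), hid.le, hid.ge]
  -- apply key_cover
  obtain ⟨t, n, ht, hn⟩ := key_cover ((r:ℝ)*(m:ℝ)/a₃) (ρu*a₃/(m:ℝ)) ((m:ℝ)*ρv)
      ((m:ℝ)*x) (y*a₃/(m:ℝ))
      (by positivity)
      (by rw [le_div_iff₀ hmR]
          have := (div_le_iff₀ (by positivity : (0:ℝ) < 2*a₃)).mp hu
          nlinarith)
      (by rw [div_le_iff₀ (show (0:ℝ) < 2 by norm_num)]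
          have := (div_le_iff₀ (by positivity : (0:ℝ) < 2*a₃)).mp hv
          rw [div_le_iff₀ h3pos]
          nlinarith [mul_le_mul_of_nonneg_right this hmR.le])
      (by have e : ((r:ℝ)*(m:ℝ)/a₃)*(ρu*a₃/(m:ℝ) - 1) = (r:ℝ)*ρu - (r:ℝ)*(m:ℝ)/a₃ := by
            field_simp
          rw [e]; linarith [h3'])
  -- convert to Delta/Gamma bounds
  have hΔ' : |(t:ℝ)*(m:ℝ)/a₃ - y| ≤ ρu := by
    have hpos : (0:ℝ) < (m:ℝ)/a₃ := by positivity
    have h2 := mul_le_mul_of_nonneg_right ht hpos.le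
    rw [← abs_of_pos hpos, ← abs_mul] at h2
    have e1 : ((t:ℝ) - y*a₃/(m:ℝ))*((m:ℝ)/a₃) = (t:ℝ)*(m:ℝ)/a₃ - y := by field_simp
    have e2 : ρu*a₃/(m:ℝ)*|(m:ℝ)/a₃| = ρu := by rw [abs_of_pos hpos]; field_simp
    rw [e1, e2] at h2; exact h2
  have hΓ' : |(t:ℝ)*(r:ℝ)/a₃ - x - (n:ℝ)/(m:ℝ)| ≤ ρv := by
    have hpos : (0:ℝ) < 1/(m:ℝ) := by positivity
    have h2 := mul_le_mul_of_nonneg_right hn hpos.le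
    rw [← abs_of_pos hpos, ← abs_mul] at h2
    have e1 : ((t:ℝ)*((r:ℝ)*(m:ℝ)/a₃) - (m:ℝ)*x - (n:ℝ))*(1/(m:ℝ))
        = (t:ℝ)*(r:ℝ)/a₃ - x - (n:ℝ)/(m:ℝ) := by field_simp
    have e2 : (m:ℝ)*ρv*|1/(m:ℝ)| = ρv := by rw [abs_of_pos hpos]; field_simp
    rw [e1, e2] at h2; exact h2
  rcases hn₃.lt_or_gt with hneg | hposn
  · -- n₃ < 0 : a₃ = -n₃, use t' = -t
    have habs : a₃ = -(n₃:ℝ) := by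
      rw [ha₃, abs_of_neg (by exact_mod_cast hneg)]
    refine final (-n) (-t) ?_ ?_
    · have e : Delta n₃ m y (-t) = -((t:ℝ)*(m:ℝ)/a₃ - y) := by
        simp only [Delta, habs]; push_cast; rw [div_neg]; ring
      rw [e, abs_neg]; exact hΔ'
    · have e : Gamma n₃ r m x y (-n) (-t) = -((t:ℝ)*(r:ℝ)/a₃ - x - (n:ℝ)/(m:ℝ)) := by
        simp only [Gamma, Delta, habs]; push_cast; rw [div_neg]; field_simp; ring
      rw [e, abs_neg]; exact hΓ'
  · -- n₃ > 0 : a₃ = n₃, use t' = t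
    have habs : a₃ = (n₃:ℝ) := by
      rw [ha₃, abs_of_pos (by exact_mod_cast hposn)]
    refine final (-n) t ?_ ?_
    · have e : Delta n₃ m y t = -((t:ℝ)*(m:ℝ)/a₃ - y) := by
        simp only [Delta, habs]; push_cast; ring
      rw [e, abs_neg]; exact hΔ'
    · have e : Gamma n₃ r m x y (-n) t = -((t:ℝ)*(r:ℝ)/a₃ - x - (n:ℝ)/(m:ℝ)) := by
        simp only [Gamma, Delta, habs]; push_cast; field_simp; ring
      rw [e, abs_neg]; exact hΓ'
end

section
/- Let n₁, n₂, n₃ be nonzero integers and let r, m be positive integers. Set E₁ = max( m/(2(|n₂|+|n₃|)), r/(2(|n₁|+|n₃|)), (|n₃|+2rm)/(2(r(|n₂|+|n₃|)+m(|n₁|+|n₃|))) ). Then for every (x,y) ∈ ℝ² there exist integers s and t such that |Δ(y,t)| ≤ E₁·(|n₂|+|n₃|)/|n₃| and |Γ(x,y,s,t)| ≤ E₁·(|n₁|+|n₃|)/|n₃|. -/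
/-- Rounding is at least as good as the integer 0. -/
lemma abs_sub_round_le_abs (w : ℝ) : |w - round w| ≤ |w| := by
  rcases le_or_gt (1/2 : ℝ) |w| with h | h
  · exact (abs_sub_round w).trans h
  · have hw : round w = 0 := by
      rw [round_eq_zero_iff]
      constructor
      · nlinarith [abs_lt.mp h]
      · nlinarith [abs_lt.mp h]
    simp [hw]

set_option maxHeartbeats 1000000 in
theorem exists_s_t_small_Delta_Gamma (n₁ n₂ n₃ : ℤ) (hn₁ : n₁ ≠ 0) (hn₂ : n₂ ≠ 0)
    (hn₃ : n₃ ≠ 0) (r m : ℤ) (hr : 0 < r) (hm : 0 < m)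
    (E₁ : ℝ)
    (hE₁ : E₁ = max (max ((m : ℝ) / (2 * (|(n₂ : ℝ)| + |(n₃ : ℝ)|)))
            ((r : ℝ) / (2 * (|(n₁ : ℝ)| + |(n₃ : ℝ)|))))
          ((|(n₃ : ℝ)| + 2 * (r : ℝ) * (m : ℝ)) /
            (2 * ((r : ℝ) * (|(n₂ : ℝ)| + |(n₃ : ℝ)|) + (m : ℝ) * (|(n₁ : ℝ)| + |(n₃ : ℝ)|))))) :
    ∀ x y : ℝ, ∃ s t : ℤ,
      |Delta n₃ m y t| ≤ E₁ * (|(n₂ : ℝ)| + |(n₃ : ℝ)|) / |(n₃ : ℝ)| ∧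
      |Gamma n₃ r m x y s t| ≤ E₁ * (|(n₁ : ℝ)| + |(n₃ : ℝ)|) / |(n₃ : ℝ)| := by
  intro x y
  have hn3R : (n₃ : ℝ) ≠ 0 := Int.cast_ne_zero.mpr hn₃
  have hn : (0:ℝ) < |(n₃ : ℝ)| := abs_pos.mpr hn3R
  have hmR : (0:ℝ) < (m : ℝ) := by exact_mod_cast hm
  have hrR : (0:ℝ) < (r : ℝ) := by exact_mod_cast hr
  set A : ℝ := |(n₁ : ℝ)| + |(n₃ : ℝ)| with hAdef
  set B : ℝ := |(n₂ : ℝ)| + |(n₃ : ℝ)| with hBdef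
  have hA : 0 < A := by positivity
  have hB : 0 < B := by positivity
  -- the three lower bounds on E₁
  have hE1 : (m : ℝ) / (2 * B) ≤ E₁ := hE₁ ▸ le_max_of_le_left (le_max_left _ _)
  have hE2 : (r : ℝ) / (2 * A) ≤ E₁ := hE₁ ▸ le_max_of_le_left (le_max_right _ _)
  have hE3 : (|(n₃ : ℝ)| + 2 * r * m) / (2 * (r * B + m * A)) ≤ E₁ :=
    hE₁ ▸ le_max_right _ _
  set L₁ : ℝ := E₁ * B / m with hL₁def
  set L₂ : ℝ := E₁ * A / r with hL₂def
  have hL1 : (1:ℝ)/2 ≤ L₁ := by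
    rw [hL₁def, le_div_iff₀ hmR, div_le_iff₀ (by positivity)] at *
    nlinarith
  have hL2 : (1:ℝ)/2 ≤ L₂ := by
    rw [hL₂def, le_div_iff₀ hrR]
    rw [div_le_iff₀ (by positivity)] at hE2
    nlinarith
  have hL3 : 1 + |(n₃ : ℝ)| / (2 * r * m) ≤ L₁ + L₂ := by
    rw [div_le_iff₀ (by positivity)] at hE3
    rw [hL₁def, hL₂def,
      show (1:ℝ) + |(n₃ : ℝ)| / (2 * r * m) = (|(n₃ : ℝ)| + 2 * r * m) / (2 * r * m) from by
        field_simp; ring,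
      show E₁ * B / m + E₁ * A / r = E₁ * (2 * (r * B + m * A)) / (2 * r * m) from by
        field_simp]
    gcongr
  set p : ℝ := y * n₃ / m with hpdef
  set c : ℝ := x - r * y / m with hcdef
  set k : ℤ := round ((m : ℝ) * c) with hkdef
  set q : ℝ := p + ((n₃ : ℝ) / r) * (c - k / m) with hqdef
  have hck : |c - (k : ℝ) / m| ≤ 1 / (2 * m) := by
    have h := abs_sub_round ((m : ℝ) * c)
    rw [hkdef]
    have : c - (round ((m:ℝ)*c) : ℝ) / m = ((m:ℝ) * c - round ((m:ℝ)*c)) / m := by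
      field_simp [mul_comm]
    rw [this, abs_div, abs_of_pos hmR, div_le_div_iff₀ hmR (by positivity)]
    nlinarith
  have hpq : |q - p| ≤ |(n₃ : ℝ)| / (2 * r * m) := by
    have : q - p = ((n₃ : ℝ) / r) * (c - k / m) := by rw [hqdef]; ring
    rw [this, abs_mul, abs_div, abs_of_pos hrR]
    calc |(n₃:ℝ)| / r * |c - (k:ℝ)/m| ≤ |(n₃:ℝ)| / r * (1 / (2*m)) := by
            apply mul_le_mul_of_nonneg_left hck (by positivity)
      _ = |(n₃:ℝ)| / (2 * r * m) := by ring
  set t : ℤ := ⌈max (p - L₁) (q - L₂)⌉ with htdef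
  have htlo : max (p - L₁) (q - L₂) ≤ (t : ℝ) := Int.le_ceil _
  have ht1 : p - L₁ ≤ (t : ℝ) := le_trans (le_max_left _ _) htlo
  have ht2 : q - L₂ ≤ (t : ℝ) := le_trans (le_max_right _ _) htlo
  have hthi : (t : ℝ) < max (p - L₁) (q - L₂) + 1 := Int.ceil_lt_add_one _
  clear_value L₁ L₂ p c k q t
  have habs : q - p ≤ |(n₃ : ℝ)| / (2 * r * m) := le_trans (le_abs_self _) hpq
  have habs' : p - q ≤ |(n₃ : ℝ)| / (2 * r * m) :=
    le_trans (le_abs_self _) (by rwa [abs_sub_comm])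
  have ht3 : (t : ℝ) ≤ p + L₁ := by
    rcases max_cases (p - L₁) (q - L₂) with ⟨hmax, _⟩ | ⟨hmax, _⟩ <;> rw [hmax] at hthi
    · linarith
    · linarith
  have ht4 : (t : ℝ) ≤ q + L₂ := by
    rcases max_cases (p - L₁) (q - L₂) with ⟨hmax, _⟩ | ⟨hmax, _⟩ <;> rw [hmax] at hthi
    · linarith
    · linarith
  set w : ℝ := (m : ℝ) * (r * (q - t) / n₃) with hwdef
  clear_value w
  refine ⟨k + round w, t, ?_, ?_⟩
  · -- Delta bound
    have hDelta : Delta n₃ m y t = (m / n₃) * (p - t) := by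
      rw [Delta, hpdef]; field_simp
    rw [hDelta, abs_mul, abs_div, abs_of_pos hmR]
    have hpt : |p - (t:ℝ)| ≤ L₁ := abs_le.mpr ⟨by linarith, by linarith⟩
    have hE₁pos : 0 < E₁ := lt_of_lt_of_le (by positivity) hE1
    calc (m:ℝ)/|(n₃:ℝ)| * |p - (t:ℝ)| ≤ (m:ℝ)/|(n₃:ℝ)| * L₁ := by
          apply mul_le_mul_of_nonneg_left hpt (by positivity)
      _ = E₁ * B / |(n₃:ℝ)| := by rw [hL₁def]; field_simp
  · -- Gamma bound
    have key : (x - (r:ℝ) * y / m) - (k:ℝ)/m + ((r:ℝ)/m) * (y - (t:ℝ) * m / n₃) = w / m := by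
      rw [hwdef, hqdef, hpdef, hcdef]
      field_simp
      ring
    have hGamma : Gamma n₃ r m x y (k + round w) t = (w - round w) / m := by
      simp only [Gamma, Delta]
      push_cast
      linear_combination key
    rw [hGamma, abs_div, abs_of_pos hmR]
    clear key hGamma htdef hkdef
    have hqt : |q - (t:ℝ)| ≤ L₂ := abs_le.mpr ⟨by linarith, by linarith⟩
    have hw : |w| ≤ (m : ℝ) * ((r:ℝ) * L₂ / |(n₃:ℝ)|) := by
      rw [hwdef, abs_mul, abs_of_pos hmR, abs_div, abs_mul, abs_of_pos hrR]
      gcongr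
    calc |w - (round w : ℝ)| / m ≤ |w| / m :=
          (div_le_div_iff_of_pos_right hmR).mpr (abs_sub_round_le_abs w)
      _ ≤ ((m : ℝ) * ((r:ℝ) * L₂ / |(n₃:ℝ)|)) / m := (div_le_div_iff_of_pos_right hmR).mpr hw
      _ = E₁ * A / |(n₃:ℝ)| := by rw [hL₂def]; field_simp
end

section
/- Let n₁ be a nonzero integer and n₂, n₃ positive integers with |n₁| < n₂ < n₃, and let r, m be integers with r ≥ 1 and m ≥ 1. If r + m ≥ 5, then (2|n₁|·n₂ + n₃·(|n₁| + n₂)) / ((|n₁| + n₂)·(r·(n₂ + n₃) + m·(|n₁| + n₃))) ≤ 5/16. -/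
theorem lemma_ii (n₁ n₂ n₃ : ℤ) (hn₁ : n₁ ≠ 0) (h12 : |n₁| < n₂) (h23 : n₂ < n₃)
    (r m : ℤ) (hr : 1 ≤ r) (hm : 1 ≤ m) (hrm : 5 ≤ r + m) :
    (2 * (|n₁| : ℝ) * (n₂ : ℝ) + (n₃ : ℝ) * ((|n₁| : ℝ) + (n₂ : ℝ))) /
      (((|n₁| : ℝ) + (n₂ : ℝ)) *
        ((r : ℝ) * ((n₂ : ℝ) + (n₃ : ℝ)) + (m : ℝ) * ((|n₁| : ℝ) + (n₃ : ℝ)))) ≤ 5 / 16 := by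
  have ha' : (1:ℤ) ≤ |n₁| := Int.one_le_abs (by omega)
  have ha : (1:ℝ) ≤ (|n₁| : ℝ) := by exact_mod_cast ha'
  have hb : ((|n₁| : ℝ)) < (n₂ : ℝ) := by exact_mod_cast h12
  have hc : ((n₂ : ℝ)) < (n₃ : ℝ) := by exact_mod_cast h23
  have hrR : (1:ℝ) ≤ (r:ℝ) := by exact_mod_cast hr
  have hmR : (1:ℝ) ≤ (m:ℝ) := by exact_mod_cast hm
  have hrmR : (5:ℝ) ≤ (r:ℝ) + (m:ℝ) := by exact_mod_cast hrm
  set A := (|n₁| : ℝ) with hA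
  set B := (n₂ : ℝ)
  set C := (n₃ : ℝ)
  -- lower bound for the inner factor
  have key : 5 * (A + C) ≤ (r:ℝ) * (B + C) + (m:ℝ) * (A + C) := by
    have h1 : (r:ℝ) * (A + C) ≤ (r:ℝ) * (B + C) := by
      apply mul_le_mul_of_nonneg_left (by linarith) (by linarith)
    nlinarith [mul_le_mul_of_nonneg_right hrmR (by linarith : (0:ℝ) ≤ A + C)]
  have hACpos : (0:ℝ) < A + C := by linarith
  have hABpos : (0:ℝ) < A + B := by linarith
  have hD : 0 < (A + B) * ((r:ℝ) * (B + C) + (m:ℝ) * (A + C)) := by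
    apply mul_pos hABpos; linarith
  rw [div_le_iff₀ hD]
  have h5 : 5 * ((A + B) * (A + C)) ≤ (A + B) * ((r:ℝ) * (B + C) + (m:ℝ) * (A + C)) := by
    nlinarith [mul_le_mul_of_nonneg_left key (le_of_lt hABpos)]
  have hN : 16 * (2 * A * B + C * (A + B)) ≤ 25 * ((A + B) * (A + C)) := by
    nlinarith [mul_nonneg (mul_nonneg (by linarith : (0:ℝ) ≤ B) (by linarith : (0:ℝ) ≤ B - A)) (by linarith : (0:ℝ) ≤ C),
      mul_nonneg (by linarith : (0:ℝ) ≤ A) (by linarith : (0:ℝ) ≤ C),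
      sq_nonneg A, mul_pos (by linarith : (0:ℝ) < A) (by linarith : (0:ℝ) < B)]
  linarith
end

section
/- Let n₁ be a nonzero integer and n₂, n₃ positive integers with |n₁| < n₂ < n₃, and let r, m be integers with r ≥ 1 and m ≥ 1. If (r, m) ≠ (1, 1), then (2|n₁|·n₂ + n₃·(|n₁| + n₂))·(2 + min(r, m)) / (4·(|n₁| + n₂)·(r·(n₂ + n₃) + m·(|n₁| + n₃))) ≤ 5/16. -/
theorem lemma_iii (n₁ n₂ n₃ : ℤ) (hn₁ : n₁ ≠ 0) (h12 : |n₁| < n₂) (h23 : n₂ < n₃)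
    (r m : ℤ) (hr : 1 ≤ r) (hm : 1 ≤ m) (hrm : (r, m) ≠ (1, 1)) :
    (2 * (|n₁| : ℝ) * (n₂ : ℝ) + (n₃ : ℝ) * ((|n₁| : ℝ) + (n₂ : ℝ))) * (2 + (min r m : ℝ)) /
      (4 * ((|n₁| : ℝ) + (n₂ : ℝ)) *
        ((r : ℝ) * ((n₂ : ℝ) + (n₃ : ℝ)) + (m : ℝ) * ((|n₁| : ℝ) + (n₃ : ℝ)))) ≤ 5 / 16 := by
  have ha0 : (0:ℤ) < |n₁| := abs_pos.mpr hn₁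
  have hA : (1:ℝ) ≤ (|n₁| : ℝ) := by exact_mod_cast ha0
  have hAB : (|n₁| : ℝ) + 1 ≤ (n₂ : ℝ) := by exact_mod_cast h12
  have hBC : (n₂ : ℝ) + 1 ≤ (n₃ : ℝ) := by exact_mod_cast h23
  have hR : (1:ℝ) ≤ (r : ℝ) := by exact_mod_cast hr
  have hM : (1:ℝ) ≤ (m : ℝ) := by exact_mod_cast hm
  have hpos : 0 < 4 * ((|n₁| : ℝ) + (n₂ : ℝ)) *
      ((r : ℝ) * ((n₂ : ℝ) + (n₃ : ℝ)) + (m : ℝ) * ((|n₁| : ℝ) + (n₃ : ℝ))) := by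
    have h1 : (0:ℝ) < (|n₁| : ℝ) + n₂ := by linarith
    have h2 : (0:ℝ) < (r : ℝ) * ((n₂ : ℝ) + (n₃ : ℝ)) + (m : ℝ) * ((|n₁| : ℝ) + (n₃ : ℝ)) := by nlinarith
    positivity
  rw [div_le_iff₀ hpos]
  rcases le_total r m with hmin | hmin
  · rw [min_eq_left (by exact_mod_cast hmin : (r:ℝ) ≤ (m:ℝ))]
    rcases eq_or_lt_of_le hr with h1 | h2
    · have hm2 : 2 ≤ m := by
        rcases eq_or_lt_of_le hm with h1' | h2'
        · exact absurd (by simp [← h1, ← h1']) hrm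
        · omega
      have hM2 : (2:ℝ) ≤ (m : ℝ) := by exact_mod_cast hm2
      have hr1 : (r : ℝ) = 1 := by exact_mod_cast h1.symm
      rw [hr1]
      nlinarith [sq_nonneg ((|n₁|:ℝ) - n₂), mul_nonneg (sub_nonneg.mpr hM2) (by nlinarith : (0:ℝ) ≤ (|n₁|:ℝ) + n₃)]
    · have hr2 : (2:ℝ) ≤ (r : ℝ) := by exact_mod_cast h2
      have hmR : (r:ℝ) ≤ (m:ℝ) := by exact_mod_cast hmin
      nlinarith [sq_nonneg ((|n₁|:ℝ) - n₂), mul_nonneg (sub_nonneg.mpr hmR) (by nlinarith : (0:ℝ) ≤ (|n₁|:ℝ) + n₃),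
        mul_nonneg (sub_nonneg.mpr hr2) (by nlinarith : (0:ℝ) ≤ (|n₁|:ℝ) + n₂ + 2*n₃),
        mul_nonneg (mul_nonneg (sub_nonneg.mpr hr2) (sub_nonneg.mpr hmR)) (by nlinarith : (0:ℝ) ≤ (|n₁|:ℝ) + n₃)]
  · rw [min_eq_right (by exact_mod_cast hmin : (m:ℝ) ≤ (r:ℝ))]
    rcases eq_or_lt_of_le hm with h1 | h2
    · have hr2' : 2 ≤ r := by
        rcases eq_or_lt_of_le hr with h1' | h2'
        · exact absurd (by simp [← h1, ← h1']) hrm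
        · omega
      have hR2 : (2:ℝ) ≤ (r : ℝ) := by exact_mod_cast hr2'
      have hm1 : (m : ℝ) = 1 := by exact_mod_cast h1.symm
      rw [hm1]
      nlinarith [sq_nonneg ((|n₁|:ℝ) - n₂), mul_nonneg (sub_nonneg.mpr hR2) (by nlinarith : (0:ℝ) ≤ (n₂:ℝ) + n₃)]
    · have hm2 : (2:ℝ) ≤ (m : ℝ) := by exact_mod_cast h2
      have hmM : (m:ℝ) ≤ (r:ℝ) := by exact_mod_cast hmin
      nlinarith [sq_nonneg ((|n₁|:ℝ) - n₂), mul_nonneg (sub_nonneg.mpr hmM) (by nlinarith : (0:ℝ) ≤ (n₂:ℝ) + n₃),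
        mul_nonneg (sub_nonneg.mpr hm2) (by nlinarith : (0:ℝ) ≤ (|n₁|:ℝ) + n₂ + 2*n₃),
        mul_nonneg (mul_nonneg (sub_nonneg.mpr hm2) (sub_nonneg.mpr hmM)) (by nlinarith : (0:ℝ) ≤ (n₂:ℝ) + n₃)]
end

section
/- Let S = {n₁, n₂, n₃} be a set of three distinct nonzero integers. If S is not of the form {−n, n, 2n} for some integer n, then the angular Kronecker constant satisfies α(S) ≤ 5/16. -/
/-- Distance from a real number to the nearest integer. -/
noncomputable def distNearestInt (t : ℝ) : ℝ := ⨅ k : ℤ, |t - (k : ℝ)|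

/-- The angular Kronecker constant of a finite set of integers: the infimum of all `ε ≥ 0`
such that every target `φ : ℤ → ℝ` can be interpolated to within `ε` (in the distance to the
nearest integer) by some `x ∈ ℝ` on the set `S`. -/
noncomputable def angularKronecker (S : Finset ℤ) : ℝ :=
  sInf {ε : ℝ | 0 ≤ ε ∧ ∀ φ : ℤ → ℝ, ∃ x : ℝ, ∀ n ∈ S, distNearestInt ((n : ℝ) * x - φ n) ≤ ε}

lemma distNearestInt_le (t : ℝ) (k : ℤ) : distNearestInt t ≤ |t - (k:ℝ)| := by
  refine ciInf_le ⟨0, ?_⟩ k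
  rintro y ⟨i, rfl⟩
  exact abs_nonneg _


lemma pair_lemma (a b : ℤ) (ha : 0 < a) (hb : 0 < b) (ra rb : ℝ) (hra : 0 ≤ ra) (hrb : 0 ≤ rb)
    (hcond : (Int.gcd a b : ℝ) ≤ 2 * (ra * b + rb * a)) (ψa ψb : ℝ) :
    ∃ x : ℝ, (∃ k : ℤ, |(a:ℝ) * x - ψa - k| ≤ ra) ∧ (∃ k : ℤ, |(b:ℝ) * x - ψb - k| ≤ rb) := by
  have hgpos : 0 < (Int.gcd a b : ℤ) := by
    exact_mod_cast Int.gcd_pos_of_ne_zero_left b (ne_of_gt ha)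
  set g : ℤ := (Int.gcd a b : ℤ) with hgdef
  obtain ⟨α, hαa⟩ : g ∣ a := Int.gcd_dvd_left a b
  obtain ⟨β, hβb⟩ : g ∣ b := Int.gcd_dvd_right a b
  have hαpos : 0 < α := by nlinarith
  have hβpos : 0 < β := by nlinarith
  have hco : Int.gcd α β = 1 := by
    have h := Int.gcd_div_gcd_div_gcd (Int.gcd_pos_of_ne_zero_left b (ne_of_gt ha))
    have e1 : a / g = α := by rw [hαa]; exact Int.mul_ediv_cancel_left _ (ne_of_gt hgpos)
    have e2 : b / g = β := by rw [hβb]; exact Int.mul_ediv_cancel_left _ (ne_of_gt hgpos)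
    rwa [← hgdef, e1, e2] at h
  obtain ⟨u, v, huv⟩ : IsCoprime α β := Int.isCoprime_iff_gcd_eq_one.mpr hco
  set T : ℝ := α * ψb - β * ψa with hT
  set N : ℤ := round T with hNdef
  set δ : ℝ := (N : ℝ) - T with hδ
  have hδle : |δ| ≤ 1/2 := by rw [hδ, abs_sub_comm]; exact abs_sub_round T
  set j : ℤ := N * v with hj
  set K : ℤ := -(N * u) with hK
  have hjK : β * j - α * K = N := by rw [hj, hK]; linear_combination N * huv
  have hαR : (0:ℝ) < α := by exact_mod_cast hαpos
  have hβR : (0:ℝ) < β := by exact_mod_cast hβpos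
  have h1 : (1:ℝ) ≤ 2*(ra*β + rb*α) := by
    have ha' : (a:ℝ) = (g:ℝ) * α := by exact_mod_cast hαa
    have hb' : (b:ℝ) = (g:ℝ) * β := by exact_mod_cast hβb
    have hgR : (0:ℝ) < g := by exact_mod_cast hgpos
    have hcond' : (g:ℝ) ≤ 2 * (ra * b + rb * a) := by
      rw [hgdef]; push_cast; exact_mod_cast hcond
    have h2 : (g:ℝ) * 1 ≤ (g:ℝ) * (2*(ra*β + rb*α)) := by
      calc (g:ℝ) * 1 = (g:ℝ) := by ring
        _ ≤ 2 * (ra * b + rb * a) := hcond'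
        _ = (g:ℝ) * (2*(ra*β + rb*α)) := by rw [ha', hb']; ring
    exact le_of_mul_le_mul_left h2 hgR
  obtain ⟨s, hs1, hs2⟩ : ∃ s : ℝ, |s| ≤ ra ∧ |(β:ℝ)*s + δ| ≤ (α:ℝ)*rb := by
    rcases le_total |δ| ((β:ℝ)*ra) with h | h
    · refine ⟨-δ/β, ?_, ?_⟩
      · rw [abs_div, abs_neg, abs_of_pos hβR, div_le_iff₀ hβR]; linarith
      · have e : (β:ℝ) * (-δ/β) + δ = 0 := by field_simp; ring
        rw [e, abs_zero]; positivity
    · rcases le_total 0 δ with hd | hd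
      · refine ⟨-ra, by rw [abs_neg, abs_of_nonneg hra], ?_⟩
        have habs : |δ| = δ := abs_of_nonneg hd
        rw [abs_of_nonneg (by nlinarith : (0:ℝ) ≤ (β:ℝ)*(-ra) + δ)]
        nlinarith [hδle]
      · refine ⟨ra, by rw [abs_of_nonneg hra], ?_⟩
        have habs : |δ| = -δ := abs_of_nonpos hd
        rw [abs_of_nonpos (by nlinarith : (β:ℝ)*ra + δ ≤ 0)]
        nlinarith [hδle]
  have haR : (a:ℝ) ≠ 0 := by exact_mod_cast ne_of_gt ha
  refine ⟨(ψa + s + j) / a, ⟨j, ?_⟩, ⟨K, ?_⟩⟩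
  · have e : (a:ℝ) * ((ψa + s + j)/a) - ψa - j = s := by field_simp; ring
    rw [e]; exact hs1
  · have hab : (α:ℝ) * b = (β:ℝ) * a := by
      have : α * b = β * a := by rw [hαa, hβb]; ring
      exact_mod_cast this
    have hjKR : (β:ℝ)*j - (α:ℝ)*K = N := by exact_mod_cast hjK
    have key : (α:ℝ) * ((b:ℝ) * ((ψa + s + j)/a) - ψb - K) = (β:ℝ)*s + δ := by
      have hxa : (a:ℝ) * ((ψa + s + j)/a) = ψa + s + j := by field_simp
      rw [hδ, hT]
      linear_combination (β:ℝ) * hxa + ((ψa + s + j)/a) * hab + hjKR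
    have habs : |(β:ℝ)*s + δ| = (α:ℝ) * |(b:ℝ) * ((ψa + s + j)/a) - ψb - K| := by
      rw [← key, abs_mul, abs_of_pos hαR]
    rw [habs] at hs2
    exact le_of_mul_le_mul_left hs2 hαR


lemma wiggle (c : ℤ) (hc : 0 < c) (x₀ ψ : ℝ) :
    ∃ t : ℝ, |t| ≤ 3 / (16 * c) ∧ ∃ k : ℤ, |(c:ℝ) * (x₀ + t) - ψ - k| ≤ 5/16 := by
  have hcR : (0:ℝ) < c := by exact_mod_cast hc
  set u : ℝ := ψ - c * x₀ with hu
  set w : ℝ := u - round u with hw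
  have hwle : |w| ≤ 1/2 := abs_sub_round u
  rcases le_total |w| (3/16) with h | h
  · refine ⟨w / c, ?_, -round u, ?_⟩
    · rw [abs_div, abs_of_pos hcR, div_le_div_iff₀ hcR (by positivity)]
      nlinarith
    · have e : (c:ℝ) * (x₀ + w/c) - ψ - (-round u : ℤ) = 0 := by
        push_cast
        field_simp [hw, hu]
        ring
      rw [e, abs_zero]; norm_num
  · rcases le_total 0 w with hd | hd
    · refine ⟨3/(16*c), ?_, -round u, ?_⟩
      · rw [abs_of_pos (by positivity)]
      · have e : (c:ℝ) * (x₀ + 3/(16*c)) - ψ - (-round u : ℤ) = 3/16 - w := by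
          push_cast
          field_simp [hw, hu]
          ring
        rw [e]
        rw [abs_of_nonneg hd] at h
        rw [abs_of_nonpos (by linarith)]
        linarith [abs_le.mp hwle]
    · refine ⟨-(3/(16*c)), ?_, -round u, ?_⟩
      · rw [abs_neg, abs_of_pos (by positivity)]
      · have e : (c:ℝ) * (x₀ + -(3/(16*c))) - ψ - (-round u : ℤ) = -(3/16) - w := by
          push_cast
          field_simp [hw, hu]
          ring
        rw [e]
        rw [abs_of_nonpos hd] at h
        rw [abs_of_nonneg (by linarith)]
        linarith [abs_le.mp hwle]

lemma gcd_ineqA (a b c : ℤ) (ha : 0 < a) (hab : a < b) (hbc : b < c) :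
    8 * c * (Int.gcd a b : ℤ) ≤ 5 * c * (a + b) - 6 * a * b := by
  set g : ℤ := (Int.gcd a b : ℤ) with hgdef
  have hgpos : 0 < g := by
    rw [hgdef]; exact_mod_cast Int.gcd_pos_of_ne_zero_left b (ne_of_gt ha)
  have hga : g ∣ a := Int.gcd_dvd_left a b
  have hgb : g ∣ b := Int.gcd_dvd_right a b
  have hgle : g ≤ a := Int.le_of_dvd ha hga
  by_cases hdvd : a ∣ b
  · obtain ⟨k, hk⟩ := hdvd
    have hk1 : 1 ≤ k := by
      by_contra h; push_neg at h
      have h0 : k ≤ 0 := by omega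
      have : a * k ≤ 0 := mul_nonpos_of_nonneg_of_nonpos (le_of_lt ha) h0
      omega
    have hk2 : 2 ≤ k := by
      rcases eq_or_lt_of_le hk1 with h1 | h1
      · exfalso; rw [hk, ← h1, mul_one] at hab; exact lt_irrefl a hab
      · omega
    have hb2a : 2 * a ≤ b := by nlinarith [mul_le_mul_of_nonneg_left hk2 (le_of_lt ha)]
    nlinarith [mul_nonneg (by linarith : (0:ℤ) ≤ c) (by linarith : (0:ℤ) ≤ b - 2*a),
      mul_pos (by linarith : (0:ℤ) < c - b) (by linarith : (0:ℤ) < b),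
      mul_pos (by linarith : (0:ℤ) < b) (by linarith : (0:ℤ) < b),
      mul_le_mul_of_nonneg_left hgle (by linarith : (0:ℤ) ≤ 8*c)]
  · have hgne : g ≠ a := fun h => hdvd (h ▸ hgb)
    obtain ⟨p, hp⟩ := hga
    have hp1 : 1 ≤ p := by
      by_contra h; push_neg at h
      have h0 : p ≤ 0 := by omega
      have : g * p ≤ 0 := mul_nonpos_of_nonneg_of_nonpos (le_of_lt hgpos) h0
      omega
    have hp2 : 2 ≤ p := by
      rcases eq_or_lt_of_le hp1 with h1 | h1
      · exfalso; apply hgne; rw [hp, ← h1, mul_one]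
      · omega
    have h2g : 2 * g ≤ a := by nlinarith [mul_le_mul_of_nonneg_left hp2 (le_of_lt hgpos)]
    nlinarith [mul_pos (by linarith : (0:ℤ) < a) (by linarith : (0:ℤ) < c - b),
      mul_pos (by linarith : (0:ℤ) < b) (by linarith : (0:ℤ) < c - a),
      mul_le_mul_of_nonneg_left h2g (by linarith : (0:ℤ) ≤ c)]

lemma gcd_ineqB (n m : ℤ) (hn : 0 < n) (hm : 0 < m) (h1 : m ≠ n) (h2 : m ≠ 2*n) :
    8 * (Int.gcd n m : ℤ) ≤ 5 * n + m := by
  set g : ℤ := (Int.gcd n m : ℤ) with hgdef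
  have hgpos : 0 < g := by
    rw [hgdef]; exact_mod_cast Int.gcd_pos_of_ne_zero_left m (ne_of_gt hn)
  have hgn : g ∣ n := Int.gcd_dvd_left n m
  have hgm : g ∣ m := Int.gcd_dvd_right n m
  have hgle : g ≤ n := Int.le_of_dvd hn hgn
  by_cases hdvd : n ∣ m
  · obtain ⟨k, hk⟩ := hdvd
    have hk1 : 1 ≤ k := by
      by_contra h; push_neg at h
      have h0 : k ≤ 0 := by omega
      have : n * k ≤ 0 := mul_nonpos_of_nonneg_of_nonpos (le_of_lt hn) h0
      omega
    have hne1 : k ≠ 1 := fun h => h1 (by rw [hk, h, mul_one])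
    have hne2 : k ≠ 2 := fun h => h2 (by rw [hk, h]; ring)
    have hk3 : 3 ≤ k := by omega
    have : 3 * n ≤ m := by nlinarith [mul_le_mul_of_nonneg_left hk3 (le_of_lt hn)]
    linarith
  · have hgne : g ≠ n := fun h => hdvd (h ▸ hgm)
    obtain ⟨p, hp⟩ := hgn
    have hp1 : 1 ≤ p := by
      by_contra h; push_neg at h
      have h0 : p ≤ 0 := by omega
      have : g * p ≤ 0 := mul_nonpos_of_nonneg_of_nonpos (le_of_lt hgpos) h0
      omega
    have hp2 : 2 ≤ p := by
      rcases eq_or_lt_of_le hp1 with h1 | h1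
      · exfalso; apply hgne; rw [hp, ← h1, mul_one]
      · omega
    have h2g : 2 * g ≤ n := by nlinarith [mul_le_mul_of_nonneg_left hp2 (le_of_lt hgpos)]
    linarith

lemma lemmaA (a b c : ℤ) (ha : 0 < a) (hab : a < b) (hbc : b < c) (ψa ψb ψc : ℝ) :
    ∃ x : ℝ, (∃ k : ℤ, |(a:ℝ)*x - ψa - k| ≤ 5/16) ∧ (∃ k : ℤ, |(b:ℝ)*x - ψb - k| ≤ 5/16) ∧
      (∃ k : ℤ, |(c:ℝ)*x - ψc - k| ≤ 5/16) := by
  have hb : 0 < b := by linarith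
  have hc : 0 < c := by linarith
  have haR : (0:ℝ) < a := by exact_mod_cast ha
  have hbR : (0:ℝ) < b := by exact_mod_cast hb
  have hcR : (0:ℝ) < c := by exact_mod_cast hc
  have habR : (a:ℝ) < b := by exact_mod_cast hab
  have hbcR : (b:ℝ) < c := by exact_mod_cast hbc
  set ra : ℝ := 5/16 - 3*a/(16*c) with hra
  set rb : ℝ := 5/16 - 3*b/(16*c) with hrb
  have hra0 : 0 ≤ ra := by
    rw [hra, sub_nonneg, div_le_div_iff₀ (by positivity) (by norm_num)]
    nlinarith
  have hrb0 : 0 ≤ rb := by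
    rw [hrb, sub_nonneg, div_le_div_iff₀ (by positivity) (by norm_num)]
    nlinarith
  have hcond : (Int.gcd a b : ℝ) ≤ 2 * (ra * b + rb * a) := by
    have h8 : ((8*c*(Int.gcd a b : ℤ) : ℤ) : ℝ) ≤ ((5*c*(a+b) - 6*a*b : ℤ) : ℝ) := by
      exact_mod_cast gcd_ineqA a b c ha hab hbc
    have e : 2 * (ra * b + rb * a) = (5*c*((a:ℝ)+b) - 6*a*b)/(8*c) := by
      rw [hra, hrb]; field_simp; ring
    rw [e, le_div_iff₀ (by positivity)]
    push_cast at h8 ⊢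
    linarith
  obtain ⟨x₀, ⟨k₁, hk₁⟩, ⟨k₂, hk₂⟩⟩ := pair_lemma a b ha hb ra rb hra0 hrb0 hcond ψa ψb
  obtain ⟨t, ht, k₃, hk₃⟩ := wiggle c hc x₀ ψc
  refine ⟨x₀ + t, ⟨k₁, ?_⟩, ⟨k₂, ?_⟩, ⟨k₃, hk₃⟩⟩
  · have e1 : (a:ℝ)*(x₀+t) - ψa - k₁ = ((a:ℝ)*x₀ - ψa - k₁) + (a:ℝ)*t := by ring
    have h2 : |(a:ℝ)*t| ≤ 3*a/(16*c) := by
      rw [abs_mul, abs_of_pos haR]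
      calc (a:ℝ) * |t| ≤ a * (3/(16*c)) := mul_le_mul_of_nonneg_left ht (le_of_lt haR)
        _ = 3*a/(16*c) := by ring
    calc |(a:ℝ)*(x₀+t) - ψa - k₁| ≤ |(a:ℝ)*x₀ - ψa - k₁| + |(a:ℝ)*t| := by
          rw [e1]; exact abs_add_le _ _
      _ ≤ ra + 3*a/(16*c) := add_le_add hk₁ h2
      _ = 5/16 := by rw [hra]; ring
  · have e1 : (b:ℝ)*(x₀+t) - ψb - k₂ = ((b:ℝ)*x₀ - ψb - k₂) + (b:ℝ)*t := by ring
    have h2 : |(b:ℝ)*t| ≤ 3*b/(16*c) := by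
      rw [abs_mul, abs_of_pos hbR]
      calc (b:ℝ) * |t| ≤ b * (3/(16*c)) := mul_le_mul_of_nonneg_left ht (le_of_lt hbR)
        _ = 3*b/(16*c) := by ring
    calc |(b:ℝ)*(x₀+t) - ψb - k₂| ≤ |(b:ℝ)*x₀ - ψb - k₂| + |(b:ℝ)*t| := by
          rw [e1]; exact abs_add_le _ _
      _ ≤ rb + 3*b/(16*c) := add_le_add hk₂ h2
      _ = 5/16 := by rw [hrb]; ring

lemma lemmaB (n m : ℤ) (hn : 0 < n) (hm : 0 < m) (h1 : m ≠ n) (h2 : m ≠ 2*n) (ψp ψq ψm : ℝ) :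
    ∃ x : ℝ, (∃ k : ℤ, |(n:ℝ)*x - ψp - k| ≤ 5/16) ∧ (∃ k : ℤ, |(n:ℝ)*x - ψq - k| ≤ 5/16) ∧
      (∃ k : ℤ, |(m:ℝ)*x - ψm - k| ≤ 5/16) := by
  have hnR : (0:ℝ) < n := by exact_mod_cast hn
  have hmR : (0:ℝ) < m := by exact_mod_cast hm
  set D : ℤ := round (ψp - ψq) with hD
  set w : ℝ := ψp - ψq - D with hw
  have hwle : |w| ≤ 1/2 := abs_sub_round (ψp - ψq)
  set μ : ℝ := ψp - w/2 with hμ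
  set ra : ℝ := 5/16 - |w|/2 with hra
  have hra0 : 0 ≤ ra := by rw [hra]; linarith
  have hcond : (Int.gcd n m : ℝ) ≤ 2 * (ra * m + (5/16) * n) := by
    have h8 : ((8 * (Int.gcd n m : ℤ) : ℤ) : ℝ) ≤ ((5*n + m : ℤ) : ℝ) := by
      exact_mod_cast gcd_ineqB n m hn hm h1 h2
    push_cast at h8
    rw [hra]
    nlinarith [mul_le_mul_of_nonneg_right hwle (le_of_lt hmR)]
  obtain ⟨x, ⟨k₁, hk₁⟩, ⟨k₂, hk₂⟩⟩ := pair_lemma n m hn hm ra (5/16) hra0 (by norm_num) hcond μ ψm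
  have habs : |-(w/2)| ≤ |w|/2 := by rw [abs_neg]; rw [abs_div]; simp
  have habs2 : |w/2| ≤ |w|/2 := by rw [abs_div]; simp
  refine ⟨x, ⟨k₁, ?_⟩, ⟨k₁ + D, ?_⟩, ⟨k₂, hk₂⟩⟩
  · have e : (n:ℝ)*x - ψp - k₁ = ((n:ℝ)*x - μ - k₁) + (-(w/2)) := by rw [hμ]; ring
    calc |(n:ℝ)*x - ψp - k₁| ≤ |(n:ℝ)*x - μ - k₁| + |-(w/2)| := by rw [e]; exact abs_add_le _ _
      _ ≤ ra + |w|/2 := add_le_add hk₁ habs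
      _ = 5/16 := by rw [hra]; ring
  · have e : (n:ℝ)*x - ψq - ((k₁ + D : ℤ) : ℝ) = ((n:ℝ)*x - μ - k₁) + w/2 := by
      push_cast
      rw [hμ, hw]
      ring
    calc |(n:ℝ)*x - ψq - ((k₁ + D : ℤ):ℝ)| ≤ |(n:ℝ)*x - μ - k₁| + |w/2| := by
          rw [e]; exact abs_add_le _ _
      _ ≤ ra + |w|/2 := add_le_add hk₁ habs2
      _ = 5/16 := by rw [hra]; ring

lemma lemmaA' (a b c : ℤ) (ha : 0 < a) (hb : 0 < b) (hc : 0 < c)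
    (hab : a ≠ b) (hac : a ≠ c) (hbc : b ≠ c) (ψ1 ψ2 ψ3 : ℝ) :
    ∃ x : ℝ, (∃ k : ℤ, |(a:ℝ)*x - ψ1 - k| ≤ 5/16) ∧ (∃ k : ℤ, |(b:ℝ)*x - ψ2 - k| ≤ 5/16) ∧
      (∃ k : ℤ, |(c:ℝ)*x - ψ3 - k| ≤ 5/16) := by
  rcases lt_or_gt_of_ne hab with h1 | h1 <;> rcases lt_or_gt_of_ne hac with h2 | h2 <;>
    rcases lt_or_gt_of_ne hbc with h3 | h3
  · obtain ⟨x, H1, H2, H3⟩ := lemmaA a b c ha h1 h3 ψ1 ψ2 ψ3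
    exact ⟨x, H1, H2, H3⟩
  · obtain ⟨x, H1, H3, H2⟩ := lemmaA a c b ha h2 h3 ψ1 ψ3 ψ2
    exact ⟨x, H1, H2, H3⟩
  · exact absurd (lt_trans h3 h2) (not_lt.mpr (le_of_lt h1))
  · obtain ⟨x, H3, H1, H2⟩ := lemmaA c a b hc h2 h1 ψ3 ψ1 ψ2
    exact ⟨x, H1, H2, H3⟩
  · obtain ⟨x, H2, H1, H3⟩ := lemmaA b a c hb h1 h2 ψ2 ψ1 ψ3
    exact ⟨x, H1, H2, H3⟩
  · exact absurd (lt_trans h2 h3) (not_lt.mpr (le_of_lt h1))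
  · obtain ⟨x, H2, H3, H1⟩ := lemmaA b c a hb h3 h2 ψ2 ψ3 ψ1
    exact ⟨x, H1, H2, H3⟩
  · obtain ⟨x, H3, H2, H1⟩ := lemmaA c b a hc h3 h1 ψ3 ψ2 ψ1
    exact ⟨x, H1, H2, H3⟩

lemma conv_bound (e a : ℤ) (ha : 0 < a) (he : e = a ∨ e = -a) (x φe : ℝ)
    (H : ∃ k : ℤ, |(a:ℝ)*x - (if e = a then φe else -φe) - k| ≤ 5/16) :
    distNearestInt ((e:ℝ)*x - φe) ≤ 5/16 := by
  obtain ⟨k, hk⟩ := H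
  rcases he with rfl | rfl
  · rw [if_pos rfl] at hk
    exact le_trans (distNearestInt_le _ k) hk
  · have hne : -a ≠ a := by omega
    rw [if_neg hne] at hk
    refine le_trans (distNearestInt_le _ (-k)) ?_
    have e2 : (((-a : ℤ)):ℝ)*x - φe - ((-k : ℤ):ℝ) = -((a:ℝ)*x - (-φe) - (k:ℝ)) := by
      push_cast; ring
    rw [e2, abs_neg]
    exact hk

theorem alpha_le_five_sixteenths (n₁ n₂ n₃ : ℤ)
    (hn₁ : n₁ ≠ 0) (hn₂ : n₂ ≠ 0) (hn₃ : n₃ ≠ 0)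
    (h12 : n₁ ≠ n₂) (h13 : n₁ ≠ n₃) (h23 : n₂ ≠ n₃)
    (hform : ¬ ∃ n : ℤ, ({n₁, n₂, n₃} : Finset ℤ) = {-n, n, 2 * n}) :
    angularKronecker {n₁, n₂, n₃} ≤ 5 / 16 := by
  have key : ∀ φ : ℤ → ℝ, ∃ x : ℝ,
      ∀ n ∈ ({n₁, n₂, n₃} : Finset ℤ), distNearestInt ((n : ℝ) * x - φ n) ≤ 5/16 := by
    intro φ
    obtain ⟨a₁, ha₁, hs₁⟩ : ∃ a : ℤ, 0 < a ∧ (n₁ = a ∨ n₁ = -a) := by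
      rcases lt_trichotomy n₁ 0 with h | h | h
      · exact ⟨-n₁, by omega, Or.inr (by ring)⟩
      · exact absurd h hn₁
      · exact ⟨n₁, h, Or.inl rfl⟩
    obtain ⟨a₂, ha₂, hs₂⟩ : ∃ a : ℤ, 0 < a ∧ (n₂ = a ∨ n₂ = -a) := by
      rcases lt_trichotomy n₂ 0 with h | h | h
      · exact ⟨-n₂, by omega, Or.inr (by ring)⟩
      · exact absurd h hn₂
      · exact ⟨n₂, h, Or.inl rfl⟩
    obtain ⟨a₃, ha₃, hs₃⟩ : ∃ a : ℤ, 0 < a ∧ (n₃ = a ∨ n₃ = -a) := by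
      rcases lt_trichotomy n₃ 0 with h | h | h
      · exact ⟨-n₃, by omega, Or.inr (by ring)⟩
      · exact absurd h hn₃
      · exact ⟨n₃, h, Or.inl rfl⟩
    set ψ₁ : ℝ := if n₁ = a₁ then φ n₁ else -φ n₁ with hψ₁
    set ψ₂ : ℝ := if n₂ = a₂ then φ n₂ else -φ n₂ with hψ₂
    set ψ₃ : ℝ := if n₃ = a₃ then φ n₃ else -φ n₃ with hψ₃
    have final : ∀ x : ℝ,
        (∃ k : ℤ, |(a₁:ℝ)*x - ψ₁ - k| ≤ 5/16) →
        (∃ k : ℤ, |(a₂:ℝ)*x - ψ₂ - k| ≤ 5/16) →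
        (∃ k : ℤ, |(a₃:ℝ)*x - ψ₃ - k| ≤ 5/16) →
        ∀ n ∈ ({n₁, n₂, n₃} : Finset ℤ), distNearestInt ((n : ℝ) * x - φ n) ≤ 5/16 := by
      intro x H1 H2 H3 n hn
      simp only [Finset.mem_insert, Finset.mem_singleton] at hn
      rcases hn with rfl | rfl | rfl
      · exact conv_bound n a₁ ha₁ hs₁ x (φ n) H1
      · exact conv_bound n a₂ ha₂ hs₂ x (φ n) H2
      · exact conv_bound n a₃ ha₃ hs₃ x (φ n) H3
    by_cases e12 : a₁ = a₂
    · -- pair among (n₁, n₂) : n₂ = -n₁, coefficient a₁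
      have hm1 : a₃ ≠ a₁ := by omega
      have hm2 : a₃ ≠ 2 * a₁ := by
        intro h
        apply hform
        have h3 : n₃ = 2*a₁ ∨ n₃ = -(2*a₁) := by omega
        rcases h3 with h3 | h3
        · exact ⟨a₁, by ext z; simp; omega⟩
        · exact ⟨-a₁, by ext z; simp; omega⟩
      obtain ⟨x, H1, H2, H3⟩ := lemmaB a₁ a₃ ha₁ ha₃ hm1 hm2 ψ₁ ψ₂ ψ₃
      have H2' : ∃ k : ℤ, |(a₂:ℝ)*x - ψ₂ - k| ≤ 5/16 := by rw [← e12]; exact H2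
      exact ⟨x, final x H1 H2' H3⟩
    · by_cases e13 : a₁ = a₃
      · have hm1 : a₂ ≠ a₁ := fun h => e12 h.symm
        have hm2 : a₂ ≠ 2 * a₁ := by
          intro h
          apply hform
          have h3 : n₂ = 2*a₁ ∨ n₂ = -(2*a₁) := by omega
          rcases h3 with h3 | h3
          · exact ⟨a₁, by ext z; simp; omega⟩
          · exact ⟨-a₁, by ext z; simp; omega⟩
        obtain ⟨x, H1, H3, H2⟩ := lemmaB a₁ a₂ ha₁ ha₂ hm1 hm2 ψ₁ ψ₃ ψ₂
        have H3' : ∃ k : ℤ, |(a₃:ℝ)*x - ψ₃ - k| ≤ 5/16 := by rw [← e13]; exact H3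
        exact ⟨x, final x H1 H2 H3'⟩
      · by_cases e23 : a₂ = a₃
        · have hm1 : a₁ ≠ a₂ := e12
          have hm2 : a₁ ≠ 2 * a₂ := by
            intro h
            apply hform
            have h3 : n₁ = 2*a₂ ∨ n₁ = -(2*a₂) := by omega
            rcases h3 with h3 | h3
            · exact ⟨a₂, by ext z; simp; omega⟩
            · exact ⟨-a₂, by ext z; simp; omega⟩
          obtain ⟨x, H2, H3, H1⟩ := lemmaB a₂ a₁ ha₂ ha₁ hm1 hm2 ψ₂ ψ₃ ψ₁
          have H3' : ∃ k : ℤ, |(a₃:ℝ)*x - ψ₃ - k| ≤ 5/16 := by rw [← e23]; exact H3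
          exact ⟨x, final x H1 H2 H3'⟩
        · obtain ⟨x, H1, H2, H3⟩ := lemmaA' a₁ a₂ a₃ ha₁ ha₂ ha₃ e12 e13 e23 ψ₁ ψ₂ ψ₃
          exact ⟨x, final x H1 H2 H3⟩
  have hbdd : BddBelow {ε : ℝ | 0 ≤ ε ∧ ∀ φ : ℤ → ℝ, ∃ x : ℝ,
      ∀ n ∈ ({n₁, n₂, n₃} : Finset ℤ), distNearestInt ((n : ℝ) * x - φ n) ≤ ε} :=
    ⟨0, fun ε hε => hε.1⟩
  have hmem : (5/16 : ℝ) ∈ {ε : ℝ | 0 ≤ ε ∧ ∀ φ : ℤ → ℝ, ∃ x : ℝ,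
      ∀ n ∈ ({n₁, n₂, n₃} : Finset ℤ), distNearestInt ((n : ℝ) * x - φ n) ≤ ε} :=
    ⟨by norm_num, key⟩
  exact csInf_le hbdd hmem
end

section
/- Let S = {n₁, n₂, n₃} be a set of three distinct nonzero integers. If S is not of the form {−n, n, 2n} for some integer n, then the angular Kronecker constant satisfies α(S) < 1/3. -/
noncomputable def nd (t : ℝ) : ℝ := |t - round t|

lemma nd_eq_min (t : ℝ) : nd t = min (Int.fract t) (1 - Int.fract t) :=
  abs_sub_round_eq_min t

lemma nd_nonneg (t : ℝ) : 0 ≤ nd t := abs_nonneg _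

lemma nd_le_abs_sub (t : ℝ) (k : ℤ) : nd t ≤ |t - k| := by
  rcases le_or_gt (k : ℝ) (⌊t⌋ : ℝ) with h | h
  · have h1 : Int.fract t ≤ t - k := by
      have hf : Int.fract t = t - ⌊t⌋ := (Int.self_sub_floor t).symm
      rw [hf]; linarith
    calc nd t ≤ Int.fract t := by rw [nd_eq_min]; exact min_le_left _ _
    _ ≤ |t - k| := le_trans h1 (le_abs_self _)
  · have hk : (⌊t⌋ : ℝ) + 1 ≤ (k : ℝ) := by exact_mod_cast Int.lt_iff_add_one_le.mp (by exact_mod_cast h)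
    have h1 : 1 - Int.fract t ≤ k - t := by
      have hf : Int.fract t = t - ⌊t⌋ := (Int.self_sub_floor t).symm
      rw [hf]; linarith
    calc nd t ≤ 1 - Int.fract t := by rw [nd_eq_min]; exact min_le_right _ _
    _ ≤ |t - k| := by rw [abs_sub_comm]; exact le_trans h1 (le_abs_self _)

lemma nd_le_abs (t : ℝ) : nd t ≤ |t| := by simpa using nd_le_abs_sub t 0

lemma nd_le_half (t : ℝ) : nd t ≤ 1 / 2 := abs_sub_round t

lemma nd_add_int (t : ℝ) (k : ℤ) : nd (t + k) = nd t := by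
  unfold nd
  rw [round_add_intCast]
  push_cast
  ring_nf

lemma nd_sub_int (t : ℝ) (k : ℤ) : nd (t - k) = nd t := by
  simpa [sub_eq_add_neg] using nd_add_int t (-k)

lemma nd_neg (t : ℝ) : nd (-t) = nd t := by
  rcases eq_or_ne (Int.fract t) 0 with h | h
  · rw [nd_eq_min, nd_eq_min, h, Int.fract_neg_eq_zero.mpr h]
  · rw [nd_eq_min, nd_eq_min, Int.fract_neg h]
    simp [min_comm]

lemma nd_add_le (s t : ℝ) : nd (s + t) ≤ nd s + nd t := by
  calc nd (s + t) ≤ |s + t - ((round s + round t : ℤ) : ℝ)| := nd_le_abs_sub _ _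
  _ ≤ |s - round s| + |t - round t| := by
      push_cast
      have : s + t - ((round s : ℝ) + round t) = (s - round s) + (t - round t) := by ring
      rw [this]; exact abs_add_le _ _
  _ = nd s + nd t := rfl

lemma nd_gt_iff {ε : ℝ} {t : ℝ} : ε < nd t ↔ ε < Int.fract t ∧ ε < 1 - Int.fract t := by
  rw [nd_eq_min, lt_min_iff]

lemma distNearestInt_eq_nd (t : ℝ) : (⨅ k : ℤ, |t - (k : ℝ)|) = nd t := by
  apply le_antisymm
  · exact ciInf_le ⟨0, by rintro y ⟨k, rfl⟩; positivity⟩ (round t)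
  · exact le_ciInf fun k => nd_le_abs_sub t k

/-- Two-frequency pinning lemma: given coprime positive `A B` and budgets `α β` with
`1 ≤ 2Aβ + 2Bα`, every pair of targets can be simultaneously approximated. -/
lemma pinning (A B : ℤ) (hA : 0 < A) (hB : 0 < B) (hco : Int.gcd A B = 1)
    (α β : ℝ) (hα : 0 ≤ α) (hβ : 0 ≤ β) (h : 1 ≤ 2 * A * β + 2 * B * α) (ψ θ : ℝ) :
    ∃ x : ℝ, nd (A * x - ψ) ≤ α ∧ nd (B * x - θ) ≤ β := by
  have hA' : (0:ℝ) < A := by exact_mod_cast hA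
  have hB' : (0:ℝ) < B := by exact_mod_cast hB
  set c : ℝ := B * ψ / A - θ with hc
  set r : ℤ := round (c * A) with hr
  set E : ℝ := c * A - r with hE
  have hE2 : |E| ≤ 1 / 2 := abs_sub_round _
  -- Bezout: find p q with B * p - q * A = -r
  obtain ⟨p, q, hpq⟩ : ∃ p q : ℤ, B * p - q * A = -r := by
    have hb := Int.gcd_eq_gcd_ab A B
    rw [hco] at hb
    have hb' : (1:ℤ) = A * Int.gcdA A B + B * Int.gcdB A B := by exact_mod_cast hb
    exact ⟨-r * Int.gcdB A B, r * Int.gcdA A B, by linear_combination r * hb'⟩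
  set D : ℝ := max (-α) (min α (-E / B)) with hD
  have hD1 : |D| ≤ α := by
    rw [abs_le]
    exact ⟨le_max_left _ _, max_le (neg_le_self hα) (min_le_left _ _)⟩
  have hKey : |E + B * D| ≤ A * β := by
    have hcond : 1 / 2 - B * α ≤ A * β := by nlinarith
    rcases le_or_gt E (-(B * α)) with h1 | h1
    · have hDv : D = α := by
        have h1' : α ≤ -E / B := by rw [le_div_iff₀ hB']; nlinarith
        rw [hD, min_eq_left h1', max_eq_right (neg_le_self hα)]
      rw [hDv, abs_le]
      constructor
      · have : -(1/2) ≤ E := neg_le_of_abs_le hE2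
        nlinarith
      · nlinarith
    rcases le_or_gt (B * α) E with h2 | h2
    · have hDv : D = -α := by
        rw [hD, max_eq_left]
        refine min_le_of_right_le ?_
        rw [div_le_iff₀ hB']; nlinarith
      rw [hDv, abs_le]
      constructor
      · nlinarith
      · have : E ≤ 1/2 := le_of_abs_le hE2
        nlinarith
    · have hDv : D = -E / B := by
        have ha' : -E / B ≤ α := by rw [div_le_iff₀ hB']; nlinarith
        have hb2 : -α ≤ -E / B := by rw [le_div_iff₀ hB']; nlinarith
        rw [hD, min_eq_right ha', max_eq_right hb2]
      rw [hDv]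
      have : E + B * (-E / B) = 0 := by field_simp; ring
      rw [this]
      simpa using mul_nonneg hA'.le hβ
  refine ⟨(ψ + p) / A + D / A, ?_, ?_⟩
  · have hAx : A * ((ψ + p) / A + D / A) - ψ = D + p := by field_simp; ring
    rw [hAx, nd_add_int]
    exact (nd_le_abs _).trans hD1
  · have hBx : B * ((ψ + p) / A + D / A) - θ = (E + B * D) / A + q := by
      have hm : (B:ℝ) * p - q * A = -r := by exact_mod_cast hpq
      have hcA : c * A = B * ψ - θ * A := by rw [hc]; field_simp
      rw [hE, hcA]
      field_simp
      linarith [hm]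
    rw [hBx, nd_add_int]
    refine (nd_le_abs _).trans ?_
    rw [abs_div, abs_of_pos hA', div_le_iff₀ hA']
    calc |E + B * D| ≤ A * β := hKey
      _ = β * A := by ring

/-- Case B core: frequencies `A, A, B` (A repeated with two independent targets). -/
lemma lemB_core (A B : ℤ) (hA : 0 < A) (hB : 0 < B) (hco : Int.gcd A B = 1)
    (h6 : 6 < 4 * A + B) :
    ∃ ε : ℝ, 0 ≤ ε ∧ ε < 1/3 ∧ ∀ a1 a2 b1 : ℝ, ∃ y : ℝ,
      nd (A * y - a1) ≤ ε ∧ nd (A * y - a2) ≤ ε ∧ nd (B * y - b1) ≤ ε := by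
  have hA' : (0:ℝ) < A := by exact_mod_cast hA
  have hB' : (0:ℝ) < B := by exact_mod_cast hB
  have h6' : (6:ℝ) < 4 * A + B := by exact_mod_cast h6
  set ε : ℝ := max (1/4) ((2 + B) / (4 * (A + B))) with hε
  have hε14 : (1/4 : ℝ) ≤ ε := le_max_left _ _
  have hεB : (2 + (B:ℝ)) / (4 * (A + B)) ≤ ε := le_max_right _ _
  have hε0 : (0:ℝ) ≤ ε := le_trans (by norm_num) hε14
  have hε13 : ε < 1/3 := by
    apply max_lt (by norm_num)
    rw [div_lt_iff₀ (by positivity)]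
    nlinarith
  have h2AB : 1 + (B:ℝ)/2 ≤ 2 * (A + B) * ε := by
    have h4 : (0:ℝ) < 4 * (A + B) := by positivity
    rw [div_le_iff₀ h4] at hεB
    nlinarith
  refine ⟨ε, hε0, hε13, fun a1 a2 b1 => ?_⟩
  set r : ℤ := round (a1 - a2) with hr
  set d : ℝ := a1 - a2 - r with hd
  have hd2 : |d| ≤ 1/2 := abs_sub_round _
  set mid : ℝ := a1 - d/2 with hmid
  have hα : (0:ℝ) ≤ ε - |d|/2 := by
    have : |d|/2 ≤ 1/4 := by linarith
    linarith
  have hcond : 1 ≤ 2 * A * ε + 2 * B * (ε - |d|/2) := by nlinarith [abs_nonneg d]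
  obtain ⟨y, h1, h2⟩ := pinning A B hA hB hco (ε - |d|/2) ε hα hε0 hcond mid b1
  have habs : nd (-(d/2)) ≤ |d|/2 := by
    refine (nd_le_abs _).trans ?_
    rw [abs_neg, abs_div]
    simp
  have habs' : nd (d/2) ≤ |d|/2 := by
    refine (nd_le_abs _).trans ?_
    rw [abs_div]; simp
  refine ⟨y, ?_, ?_, h2⟩
  · have he : A * y - a1 = (A * y - mid) + (-(d/2)) := by rw [hmid]; ring
    rw [he]
    calc nd _ ≤ nd (A * y - mid) + nd (-(d/2)) := nd_add_le _ _
      _ ≤ (ε - |d|/2) + |d|/2 := add_le_add h1 habs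
      _ = ε := by ring
  · have he : A * y - a2 = ((A * y - mid) + d/2) + r := by rw [hmid, hd]; ring
    rw [he, nd_add_int]
    calc nd _ ≤ nd (A * y - mid) + nd (d/2) := nd_add_le _ _
      _ ≤ (ε - |d|/2) + |d|/2 := add_le_add h1 habs'
      _ = ε := by ring

lemma nd_natAbs (n : ℤ) (x ψ : ℝ) :
    nd (((n.natAbs : ℤ) : ℝ) * x - (if 0 ≤ n then ψ else -ψ)) = nd ((n : ℝ) * x - ψ) := by
  rcases le_or_gt 0 n with h | h
  · rw [if_pos h, Int.natAbs_of_nonneg h]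
  · rw [if_neg (not_le.mpr h), Int.ofNat_natAbs_of_nonpos h.le]
    have he : ((-n : ℤ) : ℝ) * x - -ψ = -((n : ℝ) * x - ψ) := by push_cast; ring
    rw [he, nd_neg]

lemma lemB' (p m : ℤ) (hp : p ≠ 0) (hm : m ≠ 0) (h1 : m.natAbs ≠ p.natAbs)
    (h2 : m.natAbs ≠ 2 * p.natAbs) :
    ∃ ε : ℝ, 0 ≤ ε ∧ ε < 1/3 ∧ ∀ ψ₁ ψ₂ ψ₃ : ℝ, ∃ x : ℝ,
      nd ((p:ℝ) * x - ψ₁) ≤ ε ∧ nd (((-p : ℤ):ℝ) * x - ψ₂) ≤ ε ∧ nd ((m:ℝ) * x - ψ₃) ≤ ε := by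
  set n' : ℕ := p.natAbs with hn'
  set m' : ℕ := m.natAbs with hm'
  have hn0 : 0 < n' := Int.natAbs_pos.mpr hp
  have hm0 : 0 < m' := Int.natAbs_pos.mpr hm
  set g : ℕ := Nat.gcd n' m' with hg
  have hg0 : 0 < g := Nat.gcd_pos_of_pos_left _ hn0
  set A' : ℕ := n' / g with hA'
  set B' : ℕ := m' / g with hB'
  have hnA : n' = g * A' := by
    rw [hA', Nat.mul_div_cancel' (Nat.gcd_dvd_left n' m')]
  have hmB : m' = g * B' := by
    rw [hB', Nat.mul_div_cancel' (Nat.gcd_dvd_right n' m')]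
  have hco : Nat.Coprime A' B' := Nat.coprime_div_gcd_div_gcd hg0
  have hA0 : 0 < A' := Nat.div_pos (Nat.le_of_dvd hn0 (Nat.gcd_dvd_left n' m')) hg0
  have hB0 : 0 < B' := Nat.div_pos (Nat.le_of_dvd hm0 (Nat.gcd_dvd_right n' m')) hg0
  have hAB : A' ≠ B' := by
    intro hc; apply h1; rw [hmB, hnA, hc]
  have hB2A : B' ≠ 2 * A' := by
    intro hc; apply h2; rw [hmB, hnA, hc]; ring
  have h6 : 6 < 4 * (A' : ℤ) + (B' : ℤ) := by
    have : 6 < 4 * A' + B' := by omega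
    exact_mod_cast this
  have hcoZ : Int.gcd (A' : ℤ) (B' : ℤ) = 1 := by
    rwa [Int.gcd_natCast_natCast]
  obtain ⟨ε, hε0, hε13, hcore⟩ := lemB_core (A' : ℤ) (B' : ℤ)
    (by exact_mod_cast hA0) (by exact_mod_cast hB0) hcoZ h6
  refine ⟨ε, hε0, hε13, fun ψ₁ ψ₂ ψ₃ => ?_⟩
  obtain ⟨y, hy1, hy2, hy3⟩ := hcore (if 0 ≤ p then ψ₁ else -ψ₁)
    (if 0 ≤ -p then ψ₂ else -ψ₂) (if 0 ≤ m then ψ₃ else -ψ₃)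
  have hgR : ((g:ℝ)) ≠ 0 := by positivity
  have hNy : ((n' : ℤ) : ℝ) * (y / g) = (A' : ℤ) * y := by
    push_cast
    rw [hnA]
    push_cast
    field_simp
  have hMy : ((m' : ℤ) : ℝ) * (y / g) = (B' : ℤ) * y := by
    push_cast
    rw [hmB]
    push_cast
    field_simp
  refine ⟨y / g, ?_, ?_, ?_⟩
  · rw [← nd_natAbs p (y/g) ψ₁, ← hn', hNy]
    exact hy1
  · rw [← nd_natAbs (-p) (y/g) ψ₂, Int.natAbs_neg, ← hn', hNy]
    exact hy2
  · rw [← nd_natAbs m (y/g) ψ₃, ← hm', hMy]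
    exact hy3

open MeasureTheory intervalIntegral

/-- indicator of the "far from integers" region, at scale ε. -/
noncomputable def indf (ε : ℝ) (y : ℝ) : ℝ :=
  if ε < Int.fract y ∧ Int.fract y < 1 - ε then 1 else 0

noncomputable def cc (m : ℤ) : ℂ := -(2 * Real.pi * m) * Complex.I

lemma indf_nonneg (ε y : ℝ) : 0 ≤ indf ε y := by
  unfold indf; split <;> norm_num

lemma indf_le_one (ε y : ℝ) : indf ε y ≤ 1 := by
  unfold indf; split <;> norm_num

lemma indf_add_int (ε y : ℝ) (k : ℤ) : indf ε (y + k) = indf ε y := by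
  unfold indf; rw [Int.fract_add_intCast]

lemma indf_measurable (ε : ℝ) : Measurable (indf ε) := by
  unfold indf
  refine Measurable.ite ?_ measurable_const measurable_const
  have : {y : ℝ | ε < Int.fract y ∧ Int.fract y < 1 - ε}
      = Int.fract ⁻¹' (Set.Ioo ε (1 - ε)) := rfl
  rw [this]
  exact measurable_fract measurableSet_Ioo

lemma norm_exp_cc (m : ℤ) (x : ℝ) : ‖Complex.exp (cc m * x)‖ = 1 := by
  rw [Complex.norm_exp]
  have : (cc m * x).re = 0 := by
    simp [cc, Complex.mul_re, Complex.mul_im]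
  rw [this, Real.exp_zero]

lemma cc_int_mul_two_pi (m : ℤ) : Complex.exp (cc m) = 1 := by
  rw [cc]
  have : -(2 * (Real.pi:ℂ) * m) * Complex.I = (-m : ℤ) * (2 * Real.pi * Complex.I) := by
    push_cast; ring
  rw [this, Complex.exp_int_mul_two_pi_mul_I]

lemma intInt_indf_mul (n : ℤ) (θ ε : ℝ) (m : ℤ) (a b : ℝ) :
    IntervalIntegrable (fun x : ℝ => (indf ε (n * x - θ) : ℂ) * Complex.exp (cc m * x))
      volume a b := by
  apply IntervalIntegrable.mono_fun (intervalIntegrable_const (c := (1:ℂ)))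
  · apply Measurable.aestronglyMeasurable
    apply Measurable.mul
    · exact Complex.measurable_ofReal.comp
        ((indf_measurable ε).comp (by fun_prop))
    · exact (Complex.continuous_exp.comp (by continuity)).measurable
  · refine Filter.Eventually.of_forall fun x => ?_
    show ‖(indf ε (n * x - θ) : ℂ) * Complex.exp (cc m * x)‖ ≤ ‖(1:ℂ)‖
    rw [norm_mul, norm_exp_cc, mul_one]
    simp only [Complex.norm_real, norm_one]
    rw [Real.norm_eq_abs, abs_of_nonneg (indf_nonneg _ _)]
    exact indf_le_one _ _

lemma int01_split (N : ℕ) (hN : 0 < N) (W : ℝ → ℂ)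
    (hint : ∀ a b : ℝ, IntervalIntegrable W volume a b)
    (ω : ℂ) (hW : ∀ x : ℝ, W (x + 1/N) = ω * W x) :
    ∫ x in (0:ℝ)..1, W x = (∑ k ∈ Finset.range N, ω^k) * ∫ x in (0:ℝ)..(1/(N:ℝ)), W x := by
  have hN' : (0:ℝ) < N := by exact_mod_cast hN
  have hWk : ∀ (k : ℕ) (x : ℝ), W (x + k/N) = ω^k * W x := by
    intro k
    induction k with
    | zero => intro x; simp
    | succ k ih =>
      intro x
      have h1 : ((k+1 : ℕ):ℝ)/N = k/N + 1/N := by push_cast; ring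
      rw [h1, ← add_assoc, hW (x + k/N), ih x, pow_succ]
      ring
  have hpiece : ∀ k : ℕ,
      ∫ x in ((k:ℝ)/N)..(((k+1:ℕ)):ℝ)/N, W x = ω^k * ∫ x in (0:ℝ)..(1/(N:ℝ)), W x := by
    intro k
    have h1 : ∫ x in (0:ℝ)..(1/(N:ℝ)), W (x + k/N)
        = ∫ x in ((0:ℝ)+(k:ℝ)/N)..(1/(N:ℝ)+(k:ℝ)/N), W x :=
      integral_comp_add_right (a := 0) (b := 1/(N:ℝ)) W ((k:ℝ)/N)
    have h2 : ∫ x in (0:ℝ)..(1/(N:ℝ)), W (x + k/N)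
        = ω^k * ∫ x in (0:ℝ)..(1/(N:ℝ)), W x := by
      simp_rw [hWk k]
      exact integral_const_mul _ _
    rw [← h2, h1]
    congr 1
    · ring
    · push_cast; ring
  have hsum := intervalIntegral.sum_integral_adjacent_intervals
    (a := fun k : ℕ => (k:ℝ)/N) (n := N)
    (fun k _ => hint _ _)
  rw [show (((0:ℕ)):ℝ)/(N:ℝ) = (0:ℝ) by norm_num, show (((N:ℕ)):ℝ)/(N:ℝ) = (1:ℝ) by
    field_simp] at hsum
  rw [← hsum, Finset.sum_mul]
  refine Finset.sum_congr rfl fun k _ => ?_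
  exact hpiece k

lemma int01_vanish (n m : ℤ) (hn : 0 < n) (hnd : ¬ n ∣ m) (θ ε : ℝ) :
    ∫ x in (0:ℝ)..1, (indf ε ((n:ℝ)*x - θ):ℂ) * Complex.exp (cc m * x) = 0 := by
  set N : ℕ := n.toNat with hNd
  have hNn : (N:ℤ) = n := Int.toNat_of_nonneg hn.le
  have hN0 : 0 < N := by omega
  have hNr : ((N:ℕ):ℝ) = (n:ℝ) := by exact_mod_cast hNn
  have hNr0 : ((N:ℕ):ℝ) ≠ 0 := by rw [hNr]; exact_mod_cast hn.ne'
  set ω : ℂ := Complex.exp (cc m * (1/((N:ℕ):ℝ))) with hω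
  have hW : ∀ x : ℝ, (indf ε ((n:ℝ)*(x + 1/((N:ℕ):ℝ)) - θ):ℂ) * Complex.exp (cc m * ((x + 1/((N:ℕ):ℝ) : ℝ) : ℂ))
      = ω * ((indf ε ((n:ℝ)*x - θ):ℂ) * Complex.exp (cc m * x)) := by
    intro x
    have h1 : (n:ℝ)*(x + 1/((N:ℕ):ℝ)) - θ = ((n:ℝ)*x - θ) + ((1:ℤ):ℝ) := by
      rw [← hNr]; field_simp; ring
    rw [h1, indf_add_int]
    have h2 : cc m * ((x + 1/((N:ℕ):ℝ) : ℝ) : ℂ) = cc m * x + cc m * (1/((N:ℕ):ℝ)) := by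
      push_cast; ring
    rw [h2, Complex.exp_add]
    ring
  have hω1 : ω ≠ 1 := by
    intro hc
    rw [Complex.exp_eq_one_iff] at hc
    obtain ⟨k, hk⟩ := hc
    apply hnd
    have hIne : (Complex.I : ℂ) ≠ 0 := Complex.I_ne_zero
    have e1 : cc m * (1/((N:ℕ):ℝ)) = ((-(2 * Real.pi * m) * (1/((N:ℕ):ℝ)) : ℝ) : ℂ) * Complex.I := by
      rw [cc]; push_cast; ring
    have e2 : (k:ℂ) * (2 * Real.pi * Complex.I) = (((k : ℝ) * (2 * Real.pi) : ℝ) : ℂ) * Complex.I := by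
      push_cast; ring
    rw [e1, e2] at hk
    have hre : (-(2 * Real.pi * m) * (1/((N:ℕ):ℝ)) : ℝ) = (k : ℝ) * (2 * Real.pi) := by
      have := mul_right_cancel₀ hIne hk
      exact_mod_cast this
    have hπ : Real.pi ≠ 0 := Real.pi_ne_zero
    have hmk : (m : ℝ) = -(k : ℝ) * ((N:ℕ):ℝ) := by
      field_simp at hre
      have h2π : (2 * Real.pi) ≠ 0 := by positivity
      have : (2*Real.pi) * (m:ℝ) = (2*Real.pi) * (-(k:ℝ) * ((N:ℕ):ℝ)) := by linear_combination (-(2*Real.pi)) * hre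
      exact mul_left_cancel₀ h2π this
    have hmk' : m = -k * (N : ℤ) := by exact_mod_cast hmk
    exact ⟨-k, by rw [hmk', hNn]; ring⟩
  have hωN : ω^N = 1 := by
    rw [hω, ← Complex.exp_nat_mul]
    have : (N:ℂ) * (cc m * (1/((N:ℕ):ℝ))) = cc m := by
      have : ((N:ℕ):ℂ) ≠ 0 := by exact_mod_cast hNr0
      field_simp
      rw [Complex.ofReal_natCast, mul_div_cancel_left₀ _ this]
    rw [this, cc_int_mul_two_pi]
  rw [int01_split N hN0 _ (fun a b => intInt_indf_mul n θ ε m a b) ω hW]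
  rw [geom_sum_eq hω1, hωN]
  simp

lemma intInt_indf_mul' (θ ε : ℝ) (j : ℤ) (a b : ℝ) :
    IntervalIntegrable (fun y : ℝ => (indf ε (y - θ) : ℂ) * Complex.exp (cc j * y))
      volume a b := by
  have := intInt_indf_mul 1 θ ε j a b
  simpa using this

lemma int01_dvd (n j : ℤ) (hn : 0 < n) (θ ε : ℝ) (hε0 : 0 ≤ ε) (hεh : ε ≤ 1/2) :
    ∫ x in (0:ℝ)..1, (indf ε ((n:ℝ)*x - θ):ℂ) * Complex.exp (cc (j*n) * x)
      = Complex.exp (cc j * θ) * ∫ y in ε..(1-ε), Complex.exp (cc j * y) := by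
  set N : ℕ := n.toNat with hNd
  have hNn : (N:ℤ) = n := Int.toNat_of_nonneg hn.le
  have hN0 : 0 < N := by omega
  have hNr : ((N:ℕ):ℝ) = (n:ℝ) := by exact_mod_cast hNn
  have hNr0 : ((N:ℕ):ℝ) ≠ 0 := by rw [hNr]; exact_mod_cast hn.ne'
  set G : ℝ → ℂ := fun y => (indf ε (y - θ) : ℂ) * Complex.exp (cc j * y) with hG
  -- step 1: the integrand is G (n x)
  have hWG : ∀ x : ℝ, (indf ε ((n:ℝ)*x - θ):ℂ) * Complex.exp (cc (j*n) * x) = G ((n:ℝ) * x) := by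
    intro x
    rw [hG]
    have : cc (j*n) * (x:ℂ) = cc j * (((n:ℝ) * x : ℝ) : ℂ) := by
      rw [cc, cc]; push_cast; ring
    rw [this]
  -- step 2: shift invariance with ω = 1
  have hW : ∀ x : ℝ, (indf ε ((n:ℝ)*(x + 1/((N:ℕ):ℝ)) - θ):ℂ)
        * Complex.exp (cc (j*n) * ((x + 1/((N:ℕ):ℝ) : ℝ) : ℂ))
      = 1 * ((indf ε ((n:ℝ)*x - θ):ℂ) * Complex.exp (cc (j*n) * x)) := by
    intro x
    have h1 : (n:ℝ)*(x + 1/((N:ℕ):ℝ)) - θ = ((n:ℝ)*x - θ) + ((1:ℤ):ℝ) := by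
      rw [← hNr]; field_simp; ring
    rw [h1, indf_add_int, one_mul]
    have h2 : cc (j*n) * ((x + 1/((N:ℕ):ℝ) : ℝ) : ℂ) = cc (j*n) * x + cc j * (((n:ℝ) * (1/((N:ℕ):ℝ)) : ℝ) : ℂ) := by
      rw [cc, cc]; push_cast; ring
    have h3 : ((n:ℝ) * (1/((N:ℕ):ℝ)) : ℝ) = 1 := by rw [← hNr]; field_simp
    rw [h2, h3, Complex.exp_add]
    have h4 : cc j * ((1:ℝ):ℂ) = cc j := by simp
    rw [h4, cc_int_mul_two_pi, mul_one]
  have hsplit := int01_split N hN0 _ (fun a b => intInt_indf_mul n θ ε (j*n) a b) 1 hW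
  have hωsum : (∑ k ∈ Finset.range N, (1:ℂ)^k) = (N:ℂ) := by simp
  rw [hωsum] at hsplit
  -- step 3: substitution y = n x on [0, 1/N]
  have hsub : ∫ x in (0:ℝ)..(1/((N:ℕ):ℝ)), G ((n:ℝ) * x)
      = ((n:ℝ))⁻¹ • ∫ y in ((n:ℝ)*0)..((n:ℝ)*(1/((N:ℕ):ℝ))), G y :=
    intervalIntegral.integral_comp_mul_left G (by rw [← hNr]; exact hNr0)
  have hend : (n:ℝ)*(1/((N:ℕ):ℝ)) = 1 := by rw [← hNr]; field_simp
  rw [mul_zero, hend] at hsub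
  -- assemble: ∫₀¹ W = N • (n⁻¹ • ∫₀¹ G) = ∫₀¹ G
  have hfull : ∫ x in (0:ℝ)..1, (indf ε ((n:ℝ)*x - θ):ℂ) * Complex.exp (cc (j*n) * x)
      = ∫ y in (0:ℝ)..1, G y := by
    rw [hsplit]
    simp_rw [hWG]
    rw [hsub]
    rw [Complex.real_smul, ← mul_assoc]
    have hone : (N:ℂ) * ((((n:ℝ))⁻¹ : ℝ) : ℂ) = 1 := by
      rw [← hNr]
      push_cast
      rw [mul_inv_cancel₀]
      exact_mod_cast hNr0
    rw [hone, one_mul]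
  rw [hfull]
  -- step 4: periodicity shift by θ
  have hGper : Function.Periodic G 1 := by
    intro y
    rw [hG]
    simp only []
    have h1 : y + 1 - θ = (y - θ) + ((1:ℤ):ℝ) := by push_cast; ring
    rw [h1, indf_add_int]
    have h2 : cc j * ((y + 1 : ℝ) : ℂ) = cc j * y + cc j := by push_cast; ring
    rw [h2, Complex.exp_add, cc_int_mul_two_pi, mul_one]
  have hshift : ∫ y in (0:ℝ)..1, G y = ∫ y in (0:ℝ)..1, G (y + θ) := by
    have h1 := intervalIntegral.integral_comp_add_right (a := (0:ℝ)) (b := 1) G θ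
    have h2 := hGper.intervalIntegral_add_eq 0 θ
    rw [zero_add] at h2
    rw [h1, zero_add]
    rw [h2]
    congr 1
    ring
  rw [hshift]
  -- step 5: pull out the constant phase
  have hGθ : ∀ y : ℝ, G (y + θ) = Complex.exp (cc j * θ) * ((indf ε y : ℂ) * Complex.exp (cc j * y)) := by
    intro y
    rw [hG]
    simp only []
    have h1 : y + θ - θ = y := by ring
    rw [h1]
    have h2 : cc j * ((y + θ : ℝ) : ℂ) = cc j * y + cc j * θ := by push_cast; ring
    rw [h2, Complex.exp_add]
    ring
  simp_rw [hGθ]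
  rw [intervalIntegral.integral_const_mul]
  congr 1
  -- step 6: evaluate ∫₀¹ indf ε y * exp(cc j y) dy
  have hi1 : IntervalIntegrable (fun y : ℝ => (indf ε y : ℂ) * Complex.exp (cc j * y)) volume 0 ε := by
    have := intInt_indf_mul 1 0 ε j 0 ε; simpa using this
  have hi2 : IntervalIntegrable (fun y : ℝ => (indf ε y : ℂ) * Complex.exp (cc j * y)) volume ε (1-ε) := by
    have := intInt_indf_mul 1 0 ε j ε (1-ε); simpa using this
  have hi3 : IntervalIntegrable (fun y : ℝ => (indf ε y : ℂ) * Complex.exp (cc j * y)) volume (1-ε) 1 := by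
    have := intInt_indf_mul 1 0 ε j (1-ε) 1; simpa using this
  have hsplit2 : ∫ y in (0:ℝ)..1, (indf ε y : ℂ) * Complex.exp (cc j * y)
      = (∫ y in (0:ℝ)..ε, (indf ε y : ℂ) * Complex.exp (cc j * y))
        + ((∫ y in ε..(1-ε), (indf ε y : ℂ) * Complex.exp (cc j * y))
        + (∫ y in (1-ε)..(1:ℝ), (indf ε y : ℂ) * Complex.exp (cc j * y))) := by
    rw [intervalIntegral.integral_add_adjacent_intervals hi2 hi3,
      intervalIntegral.integral_add_adjacent_intervals hi1 (hi2.trans hi3)]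
  rw [hsplit2]
  have hz1 : (∫ y in (0:ℝ)..ε, (indf ε y : ℂ) * Complex.exp (cc j * y)) = 0 := by
    rw [intervalIntegral.integral_congr (g := fun _ => 0)]
    · simp
    · intro y hy
      rw [Set.uIcc_of_le hε0] at hy
      have hy0 : 0 ≤ y := hy.1
      have hy1 : y < 1 := lt_of_le_of_lt hy.2 (by linarith)
      have : Int.fract y = y := Int.fract_eq_self.mpr ⟨hy0, hy1⟩
      simp only [indf, this]
      rw [if_neg]
      · simp
      · rintro ⟨h1, -⟩
        exact absurd (lt_of_lt_of_le h1 hy.2) (lt_irrefl ε)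
  have hz3 : (∫ y in (1-ε)..(1:ℝ), (indf ε y : ℂ) * Complex.exp (cc j * y)) = 0 := by
    rw [intervalIntegral.integral_congr (g := fun _ => 0)]
    · simp
    · intro y hy
      rw [Set.uIcc_of_le (by linarith : (1:ℝ)-ε ≤ 1)] at hy
      rcases lt_or_eq_of_le hy.2 with h1 | h1
      · have : Int.fract y = y := Int.fract_eq_self.mpr ⟨by linarith [hy.1], h1⟩
        simp only [indf, this]
        rw [if_neg]
        · simp
        · rintro ⟨-, h2⟩
          exact absurd (lt_of_le_of_lt hy.1 h2) (by simp)
      · have : Int.fract y = 0 := by rw [h1]; exact Int.fract_one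
        simp only [indf, this]
        rw [if_neg]
        · simp
        · rintro ⟨h2, -⟩
          exact absurd (lt_of_le_of_lt hε0 h2) (lt_irrefl 0)
  have hm : (∫ y in ε..(1-ε), (indf ε y : ℂ) * Complex.exp (cc j * y))
      = ∫ y in ε..(1-ε), Complex.exp (cc j * y) := by
    apply intervalIntegral.integral_congr_ae
    have h1 : ∀ᵐ (y : ℝ) ∂volume, y ≠ (1 - ε) := by
      rw [MeasureTheory.ae_iff]
      have : {y : ℝ | ¬ y ≠ (1-ε)} = {1-ε} := by ext y; simp
      rw [this]
      exact measure_singleton _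
    filter_upwards [h1] with y hy hymem
    rw [Set.uIoc_of_le (by linarith : ε ≤ 1-ε)] at hymem
    have hy1 : y < 1 - ε := lt_of_le_of_ne hymem.2 hy
    have hfr : Int.fract y = y := Int.fract_eq_self.mpr ⟨by linarith [hymem.1], by linarith⟩
    simp only [indf, hfr]
    rw [if_pos ⟨hymem.1, hy1⟩]
    simp
  rw [hz1, hz3, hm]
  ring

lemma cc_zero : cc 0 = 0 := by simp [cc]

lemma cc_ne_zero (m : ℤ) (hm : m ≠ 0) : cc m ≠ 0 := by
  simp only [cc]
  intro hc
  rcases mul_eq_zero.mp hc with h | h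
  · have h2 : (2 * Real.pi * (m:ℝ) : ℝ) = 0 := by exact_mod_cast neg_eq_zero.mp (by exact_mod_cast h)
    have hπ := Real.pi_ne_zero
    have hm' : (m:ℝ) ≠ 0 := by exact_mod_cast hm
    have h3 : (2 * Real.pi) * (m:ℝ) ≠ 0 := mul_ne_zero (by positivity) hm'
    exact h3 h2
  · exact Complex.I_ne_zero h

lemma mass_eq (n : ℤ) (hn : 0 < n) (θ ε : ℝ) (hε0 : 0 ≤ ε) (hεh : ε ≤ 1/2) :
    ∫ x in (0:ℝ)..1, indf ε ((n:ℝ)*x - θ) = 1 - 2*ε := by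
  have h := int01_dvd n 0 hn θ ε hε0 hεh
  rw [zero_mul, cc_zero] at h
  simp only [zero_mul, Complex.exp_zero, mul_one, one_mul] at h
  rw [intervalIntegral.integral_const] at h
  rw [intervalIntegral.integral_ofReal] at h
  have : ((1:ℝ) - ε - ε) • (1:ℂ) = (((1 - 2*ε : ℝ)):ℂ) := by
    rw [Complex.real_smul]; push_cast; ring
  rw [this] at h
  exact_mod_cast h

lemma norm_Dv (ε : ℝ) (hε1 : 0 ≤ Real.sin (2*Real.pi*ε)) :
    ‖∫ y in ε..(1-ε), Complex.exp (cc 1 * y)‖ = Real.sin (2*Real.pi*ε) / Real.pi := by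
  have hc : cc 1 ≠ 0 := cc_ne_zero 1 one_ne_zero
  rw [integral_exp_mul_complex hc]
  have e1 : cc 1 * ((1-ε : ℝ):ℂ) = ((2*Real.pi*ε : ℝ):ℂ) * Complex.I + ((-1 : ℤ):ℂ) * (2*Real.pi*Complex.I) := by
    rw [cc]; push_cast; ring
  have e2 : cc 1 * ((ε : ℝ):ℂ) = ((-(2*Real.pi*ε) : ℝ):ℂ) * Complex.I := by
    rw [cc]; push_cast; ring
  rw [e1, e2, Complex.exp_add, Complex.exp_int_mul_two_pi_mul_I, mul_one]
  rw [Complex.exp_mul_I, Complex.exp_mul_I]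
  have hD : (Complex.cos ((2*Real.pi*ε : ℝ):ℂ) + Complex.sin ((2*Real.pi*ε : ℝ):ℂ) * Complex.I
      - (Complex.cos ((-(2*Real.pi*ε) : ℝ):ℂ) + Complex.sin ((-(2*Real.pi*ε) : ℝ):ℂ) * Complex.I)) / cc 1
      = (((- Real.sin (2*Real.pi*ε) / Real.pi : ℝ)) : ℂ) := by
    have hneg : ((-(2*Real.pi*ε):ℝ):ℂ) = -(((2*Real.pi*ε:ℝ)):ℂ) := by push_cast; ring
    rw [hneg, Complex.cos_neg, Complex.sin_neg, ← Complex.ofReal_sin, cc]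
    have hI := Complex.I_ne_zero
    have hπ : (Real.pi : ℂ) ≠ 0 := by exact_mod_cast Complex.ofReal_ne_zero.mpr Real.pi_ne_zero
    push_cast
    field_simp
    ring
  rw [hD, Complex.norm_real, Real.norm_eq_abs, abs_div, abs_neg,
    abs_of_nonneg hε1, abs_of_pos Real.pi_pos]

lemma intInt_indf_real (n : ℤ) (θ ε : ℝ) (a b : ℝ) :
    IntervalIntegrable (fun x : ℝ => indf ε ((n:ℝ)*x - θ)) volume a b := by
  apply IntervalIntegrable.mono_fun (_root_.intervalIntegrable_const (c := (1:ℝ)))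
  · exact (((indf_measurable ε).comp (by fun_prop))).aestronglyMeasurable
  · refine Filter.Eventually.of_forall fun x => ?_
    show ‖indf ε ((n:ℝ)*x - θ)‖ ≤ ‖(1:ℝ)‖
    rw [Real.norm_eq_abs, abs_of_nonneg (indf_nonneg _ _), norm_one]
    exact indf_le_one _ _

lemma lemA_ord (a b c : ℤ) (ha : 0 < a) (hab : a < b) (hbc : b < c) (θ₁ θ₂ θ₃ : ℝ) :
    ∃ x : ℝ, nd ((a:ℝ)*x - θ₁) ≤ 1/3 - 1/100 ∧ nd ((b:ℝ)*x - θ₂) ≤ 1/3 - 1/100 ∧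
      nd ((c:ℝ)*x - θ₃) ≤ 1/3 - 1/100 := by
  have hε0 : (0:ℝ) ≤ 1/3 - 1/100 := by norm_num
  have hεh : (1/3 - 1/100 : ℝ) ≤ 1/2 := by norm_num
  set ε : ℝ := 1/3 - 1/100 with hε
  by_contra hcon
  push_neg at hcon
  have hcov : ∀ x : ℝ, 1 ≤ indf ε ((a:ℝ)*x-θ₁) + indf ε ((b:ℝ)*x-θ₂) + indf ε ((c:ℝ)*x-θ₃) := by
    intro x
    have hone : ∀ t : ℝ, ε < nd t → indf ε t = 1 := by
      intro t ht
      obtain ⟨h1, h2⟩ := nd_gt_iff.mp ht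
      simp only [indf]
      rw [if_pos ⟨h1, by linarith⟩]
    have n1 := indf_nonneg ε ((a:ℝ)*x-θ₁)
    have n2 := indf_nonneg ε ((b:ℝ)*x-θ₂)
    have n3 := indf_nonneg ε ((c:ℝ)*x-θ₃)
    rcases le_or_gt (nd ((a:ℝ)*x-θ₁)) ε with h1 | h1
    · rcases le_or_gt (nd ((b:ℝ)*x-θ₂)) ε with h2 | h2
      · have h3 := hcon x h1 h2
        rw [hone _ h3]
        linarith
      · rw [hone _ h2]; linarith
    · rw [hone _ h1]; linarith
  have hb0 : 0 < b := lt_trans ha hab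
  have hc0 : 0 < c := lt_trans hb0 hbc
  have hbnd : ¬ (b ∣ a) := fun hd => absurd (Int.le_of_dvd ha hd) (not_le.mpr hab)
  have hcnd : ¬ (c ∣ a) := fun hd => absurd (Int.le_of_dvd ha hd) (not_le.mpr (hab.trans hbc))
  have hI2 := int01_vanish b a hb0 hbnd θ₂ ε
  have hI3 := int01_vanish c a hc0 hcnd θ₃ ε
  have hI1 : ∫ x in (0:ℝ)..1, (indf ε ((a:ℝ)*x - θ₁):ℂ) * Complex.exp (cc a * x)
      = Complex.exp (cc 1 * θ₁) * ∫ y in ε..(1-ε), Complex.exp (cc 1 * y) := by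
    have h := int01_dvd a 1 ha θ₁ ε hε0 hεh
    rwa [one_mul] at h
  have hE0 : ∫ x in (0:ℝ)..1, Complex.exp (cc a * x) = 0 := by
    rw [integral_exp_mul_complex (cc_ne_zero a ha.ne')]
    norm_num [cc_int_mul_two_pi]
  -- linearity: the integral of (g x : ℂ) * E x equals I1
  have hint1 := intInt_indf_mul a θ₁ ε a (0:ℝ) 1
  have hint2 := intInt_indf_mul b θ₂ ε a (0:ℝ) 1
  have hint3 := intInt_indf_mul c θ₃ ε a (0:ℝ) 1
  have hintE : IntervalIntegrable (fun x : ℝ => Complex.exp (cc a * x)) volume 0 1 :=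
    Continuous.intervalIntegrable (Complex.continuous_exp.comp (by continuity)) _ _
  have hTsum : ∫ x in (0:ℝ)..1,
      (((indf ε ((a:ℝ)*x-θ₁) + indf ε ((b:ℝ)*x-θ₂) + indf ε ((c:ℝ)*x-θ₃) - 1 : ℝ)):ℂ)
        * Complex.exp (cc a * x)
      = ∫ x in (0:ℝ)..1, (indf ε ((a:ℝ)*x - θ₁):ℂ) * Complex.exp (cc a * x) := by
    have heq : ∀ x ∈ Set.uIcc (0:ℝ) 1,
        (((indf ε ((a:ℝ)*x-θ₁) + indf ε ((b:ℝ)*x-θ₂) + indf ε ((c:ℝ)*x-θ₃) - 1 : ℝ)):ℂ)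
          * Complex.exp (cc a * x)
        = ((indf ε ((a:ℝ)*x-θ₁):ℂ) * Complex.exp (cc a * x)
          + (indf ε ((b:ℝ)*x-θ₂):ℂ) * Complex.exp (cc a * x))
          + ((indf ε ((c:ℝ)*x-θ₃):ℂ) * Complex.exp (cc a * x) - Complex.exp (cc a * x)) := by
      intro x _
      push_cast
      ring
    rw [intervalIntegral.integral_congr heq]
    rw [intervalIntegral.integral_add (hint1.add hint2) (hint3.sub hintE),
      intervalIntegral.integral_add hint1 hint2,
      intervalIntegral.integral_sub hint3 hintE]
    rw [hI2, hI3, hE0]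
    ring
  -- the L¹ bound
  have hRa := mass_eq a ha θ₁ ε hε0 hεh
  have hRb := mass_eq b hb0 θ₂ ε hε0 hεh
  have hRc := mass_eq c hc0 θ₃ ε hε0 hεh
  have hr1 := intInt_indf_real a θ₁ ε (0:ℝ) 1
  have hr2 := intInt_indf_real b θ₂ ε (0:ℝ) 1
  have hr3 := intInt_indf_real c θ₃ ε (0:ℝ) 1
  have hrC : IntervalIntegrable (fun _ : ℝ => (1:ℝ)) volume 0 1 := _root_.intervalIntegrable_const
  have hgint : ∫ x in (0:ℝ)..1,
      (indf ε ((a:ℝ)*x-θ₁) + indf ε ((b:ℝ)*x-θ₂) + indf ε ((c:ℝ)*x-θ₃) - 1)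
      = 3*(1-2*ε) - 1 := by
    rw [intervalIntegral.integral_sub ((hr1.add hr2).add hr3) hrC,
      intervalIntegral.integral_add (hr1.add hr2) hr3,
      intervalIntegral.integral_add hr1 hr2]
    rw [hRa, hRb, hRc]
    simp
    ring
  have hbound : ‖∫ x in (0:ℝ)..1,
      (((indf ε ((a:ℝ)*x-θ₁) + indf ε ((b:ℝ)*x-θ₂) + indf ε ((c:ℝ)*x-θ₃) - 1 : ℝ)):ℂ)
        * Complex.exp (cc a * x)‖ ≤ 3*(1-2*ε) - 1 := by
    refine le_trans (intervalIntegral.norm_integral_le_integral_norm (by norm_num)) ?_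
    have heq : ∀ x ∈ Set.uIcc (0:ℝ) 1,
        ‖(((indf ε ((a:ℝ)*x-θ₁) + indf ε ((b:ℝ)*x-θ₂) + indf ε ((c:ℝ)*x-θ₃) - 1 : ℝ)):ℂ)
          * Complex.exp (cc a * x)‖
        = indf ε ((a:ℝ)*x-θ₁) + indf ε ((b:ℝ)*x-θ₂) + indf ε ((c:ℝ)*x-θ₃) - 1 := by
      intro x _
      rw [norm_mul, norm_exp_cc, mul_one, Complex.norm_real, Real.norm_eq_abs,
        abs_of_nonneg (by linarith [hcov x])]
    rw [intervalIntegral.integral_congr heq, hgint]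
  -- norm of I1
  have hsin : Real.sqrt 3 / 2 ≤ Real.sin (2*Real.pi*ε) := by
    have hπ := Real.pi_pos
    have h2πε : 2*Real.pi*ε = Real.pi - (Real.pi * (53/150)) := by
      rw [hε]; ring
    rw [h2πε, Real.sin_pi_sub]
    have hmem1 : Real.pi/3 ∈ Set.Icc (-(Real.pi/2)) (Real.pi/2) := by
      constructor <;> nlinarith
    have hmem2 : Real.pi * (53/150) ∈ Set.Icc (-(Real.pi/2)) (Real.pi/2) := by
      constructor <;> nlinarith
    have hle : Real.pi/3 ≤ Real.pi * (53/150) := by nlinarith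
    have := Real.strictMonoOn_sin.monotoneOn hmem1 hmem2 hle
    rw [Real.sin_pi_div_three] at this
    exact this
  have hsqrt3 : (17/10 : ℝ) ≤ Real.sqrt 3 := by
    have h := Real.sq_sqrt (by norm_num : (0:ℝ) ≤ 3)
    nlinarith [Real.sqrt_nonneg 3]
  have hsin0 : 0 ≤ Real.sin (2*Real.pi*ε) := le_trans (by positivity) hsin
  have hnormI1 : ‖∫ x in (0:ℝ)..1, (indf ε ((a:ℝ)*x - θ₁):ℂ) * Complex.exp (cc a * x)‖
      = Real.sin (2*Real.pi*ε) / Real.pi := by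
    rw [hI1, norm_mul, norm_exp_cc, one_mul, norm_Dv ε hsin0]
  rw [hTsum, hnormI1] at hbound
  -- numeric contradiction
  have hπ15 : Real.pi < 3.15 := Real.pi_lt_d2
  have hπ0 := Real.pi_pos
  rw [div_le_iff₀ hπ0] at hbound
  have hval : (3*(1-2*ε) - 1 : ℝ) = 3/50 := by rw [hε]; norm_num
  rw [hval] at hbound
  nlinarith

lemma lemA' (a b c : ℤ) (ha : 0 < a) (hb : 0 < b) (hc : 0 < c)
    (hab : a ≠ b) (hac : a ≠ c) (hbc : b ≠ c) (θ₁ θ₂ θ₃ : ℝ) :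
    ∃ x : ℝ, nd ((a:ℝ)*x - θ₁) ≤ 1/3 - 1/100 ∧ nd ((b:ℝ)*x - θ₂) ≤ 1/3 - 1/100 ∧
      nd ((c:ℝ)*x - θ₃) ≤ 1/3 - 1/100 := by
  rcases lt_trichotomy a b with h1 | h1 | h1
  · rcases lt_trichotomy b c with h2 | h2 | h2
    · exact lemA_ord a b c ha h1 h2 θ₁ θ₂ θ₃
    · exact absurd h2 hbc
    · rcases lt_trichotomy a c with h3 | h3 | h3
      · obtain ⟨x, p1, p3, p2⟩ := lemA_ord a c b ha h3 h2 θ₁ θ₃ θ₂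
        exact ⟨x, p1, p2, p3⟩
      · exact absurd h3 hac
      · obtain ⟨x, p3, p1, p2⟩ := lemA_ord c a b hc h3 h1 θ₃ θ₁ θ₂
        exact ⟨x, p1, p2, p3⟩
  · exact absurd h1 hab
  · rcases lt_trichotomy a c with h3 | h3 | h3
    · obtain ⟨x, p2, p1, p3⟩ := lemA_ord b a c hb h1 h3 θ₂ θ₁ θ₃
      exact ⟨x, p1, p2, p3⟩
    · exact absurd h3 hac
    · rcases lt_trichotomy b c with h2 | h2 | h2
      · obtain ⟨x, p2, p3, p1⟩ := lemA_ord b c a hb h2 h3 θ₂ θ₃ θ₁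
        exact ⟨x, p1, p2, p3⟩
      · exact absurd h2 hbc
      · obtain ⟨x, p3, p2, p1⟩ := lemA_ord c b a hc h2 h1 θ₃ θ₂ θ₁
        exact ⟨x, p1, p2, p3⟩


lemma dni_eq (t : ℝ) : distNearestInt t = nd t := by
  unfold distNearestInt
  exact distNearestInt_eq_nd t

theorem alpha_lt_one_third (n₁ n₂ n₃ : ℤ)
    (hn₁ : n₁ ≠ 0) (hn₂ : n₂ ≠ 0) (hn₃ : n₃ ≠ 0)
    (h12 : n₁ ≠ n₂) (h13 : n₁ ≠ n₃) (h23 : n₂ ≠ n₃)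
    (hform : ¬ ∃ n : ℤ, ({n₁, n₂, n₃} : Finset ℤ) = {-n, n, 2 * n}) :
    angularKronecker {n₁, n₂, n₃} < 1 / 3 := by
  have key : ∃ ε : ℝ, 0 ≤ ε ∧ ε < 1/3 ∧ ∀ φ : ℤ → ℝ, ∃ x : ℝ,
      nd ((n₁:ℝ)*x - φ n₁) ≤ ε ∧ nd ((n₂:ℝ)*x - φ n₂) ≤ ε ∧ nd ((n₃:ℝ)*x - φ n₃) ≤ ε := by
    by_cases h12a : n₁.natAbs = n₂.natAbs
    · -- n₂ = -n₁; frequencies (n₁, n₂ = -n₁, n₃)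
      have hq : n₂ = -n₁ := by
        rcases Int.natAbs_eq_natAbs_iff.mp h12a.symm with h | h
        · exact absurd h.symm h12
        · exact h
      have hm1 : n₃.natAbs ≠ n₁.natAbs := by
        intro hc
        rcases Int.natAbs_eq_natAbs_iff.mp hc with h | h
        · exact h13 h.symm
        · rw [← hq] at h; exact h23 h.symm
      have hm2 : n₃.natAbs ≠ 2 * n₁.natAbs := by
        intro hc
        have h2p : n₃ = 2*n₁ ∨ n₃ = -(2*n₁) := by
          apply Int.natAbs_eq_natAbs_iff.mp
          rw [hc, Int.natAbs_mul]
          rfl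
        rcases h2p with h | h
        · refine hform ⟨n₁, ?_⟩
          rw [hq, h]
          ext z; simp; try tauto
        · refine hform ⟨-n₁, ?_⟩
          rw [hq, h]
          have e2 : 2*(-n₁) = -(2*n₁) := by ring
          rw [neg_neg, e2]
      obtain ⟨ε, hε0, hε13, hsol⟩ := lemB' n₁ n₃ hn₁ hn₃ hm1 hm2
      refine ⟨ε, hε0, hε13, fun φ => ?_⟩
      obtain ⟨x, hx1, hx2, hx3⟩ := hsol (φ n₁) (φ n₂) (φ n₃)
      refine ⟨x, hx1, ?_, hx3⟩
      have hcast : ((-n₁ : ℤ):ℝ) = (n₂:ℝ) := by rw [hq]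
      rwa [hcast] at hx2
    by_cases h13a : n₁.natAbs = n₃.natAbs
    · -- n₃ = -n₁; frequencies (n₁, n₃ = -n₁, n₂)
      have hq : n₃ = -n₁ := by
        rcases Int.natAbs_eq_natAbs_iff.mp h13a.symm with h | h
        · exact absurd h.symm h13
        · exact h
      have hm1 : n₂.natAbs ≠ n₁.natAbs := by
        intro hc
        rcases Int.natAbs_eq_natAbs_iff.mp hc with h | h
        · exact h12 h.symm
        · rw [← hq] at h; exact h23 h
      have hm2 : n₂.natAbs ≠ 2 * n₁.natAbs := by
        intro hc
        have h2p : n₂ = 2*n₁ ∨ n₂ = -(2*n₁) := by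
          apply Int.natAbs_eq_natAbs_iff.mp
          rw [hc, Int.natAbs_mul]
          rfl
        rcases h2p with h | h
        · refine hform ⟨n₁, ?_⟩
          rw [hq, h]
          ext z; simp; try tauto
        · refine hform ⟨-n₁, ?_⟩
          rw [hq, h]
          have e2 : 2*(-n₁) = -(2*n₁) := by ring
          rw [neg_neg, e2]
          ext z; simp; tauto
      obtain ⟨ε, hε0, hε13, hsol⟩ := lemB' n₁ n₂ hn₁ hn₂ hm1 hm2
      refine ⟨ε, hε0, hε13, fun φ => ?_⟩
      obtain ⟨x, hx1, hx3, hx2⟩ := hsol (φ n₁) (φ n₃) (φ n₂)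
      refine ⟨x, hx1, hx2, ?_⟩
      have hcast : ((-n₁ : ℤ):ℝ) = (n₃:ℝ) := by rw [hq]
      rwa [hcast] at hx3
    by_cases h23a : n₂.natAbs = n₃.natAbs
    · -- n₃ = -n₂; frequencies (n₂, n₃ = -n₂, n₁)
      have hq : n₃ = -n₂ := by
        rcases Int.natAbs_eq_natAbs_iff.mp h23a.symm with h | h
        · exact absurd h.symm h23
        · exact h
      have hm1 : n₁.natAbs ≠ n₂.natAbs := h12a
      have hm2 : n₁.natAbs ≠ 2 * n₂.natAbs := by
        intro hc
        have h2p : n₁ = 2*n₂ ∨ n₁ = -(2*n₂) := by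
          apply Int.natAbs_eq_natAbs_iff.mp
          rw [hc, Int.natAbs_mul]
          rfl
        rcases h2p with h | h
        · refine hform ⟨n₂, ?_⟩
          rw [hq, h]
          ext z; simp; try tauto
        · refine hform ⟨-n₂, ?_⟩
          rw [hq, h]
          have e2 : 2*(-n₂) = -(2*n₂) := by ring
          rw [neg_neg, e2]
          ext z; simp; tauto
      obtain ⟨ε, hε0, hε13, hsol⟩ := lemB' n₂ n₁ hn₂ hn₁ hm1 hm2
      refine ⟨ε, hε0, hε13, fun φ => ?_⟩
      obtain ⟨x, hx2, hx3, hx1⟩ := hsol (φ n₂) (φ n₃) (φ n₁)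
      refine ⟨x, hx1, hx2, ?_⟩
      have hcast : ((-n₂ : ℤ):ℝ) = (n₃:ℝ) := by rw [hq]
      rwa [hcast] at hx3
    · -- all absolute values distinct: Case A
      refine ⟨1/3 - 1/100, by norm_num, by norm_num, fun φ => ?_⟩
      have hpos : ∀ k : ℤ, k ≠ 0 → (0:ℤ) < (k.natAbs : ℤ) := fun k hk => by
        exact_mod_cast Int.natAbs_pos.mpr hk
      have hd1 : ((n₁.natAbs : ℤ)) ≠ ((n₂.natAbs : ℤ)) := by exact_mod_cast h12a
      have hd2 : ((n₁.natAbs : ℤ)) ≠ ((n₃.natAbs : ℤ)) := by exact_mod_cast h13a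
      have hd3 : ((n₂.natAbs : ℤ)) ≠ ((n₃.natAbs : ℤ)) := by exact_mod_cast h23a
      obtain ⟨x, hx1, hx2, hx3⟩ := lemA' (n₁.natAbs : ℤ) (n₂.natAbs : ℤ) (n₃.natAbs : ℤ)
        (hpos n₁ hn₁) (hpos n₂ hn₂) (hpos n₃ hn₃) hd1 hd2 hd3
        (if 0 ≤ n₁ then φ n₁ else -(φ n₁)) (if 0 ≤ n₂ then φ n₂ else -(φ n₂))
        (if 0 ≤ n₃ then φ n₃ else -(φ n₃))
      rw [nd_natAbs n₁ x (φ n₁)] at hx1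
      rw [nd_natAbs n₂ x (φ n₂)] at hx2
      rw [nd_natAbs n₃ x (φ n₃)] at hx3
      exact ⟨x, hx1, hx2, hx3⟩
  obtain ⟨ε, hε0, hε13, hsolve⟩ := key
  have hmem : ε ∈ {ε : ℝ | 0 ≤ ε ∧ ∀ φ : ℤ → ℝ, ∃ x : ℝ,
      ∀ n ∈ ({n₁, n₂, n₃} : Finset ℤ), distNearestInt ((n : ℝ) * x - φ n) ≤ ε} := by
    refine ⟨hε0, fun φ => ?_⟩
    obtain ⟨x, h1, h2, h3⟩ := hsolve φ
    refine ⟨x, fun n hn => ?_⟩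
    rw [dni_eq]
    simp only [Finset.mem_insert, Finset.mem_singleton] at hn
    rcases hn with rfl | rfl | rfl
    exacts [h1, h2, h3]
  have hbdd : BddBelow {ε : ℝ | 0 ≤ ε ∧ ∀ φ : ℤ → ℝ, ∃ x : ℝ,
      ∀ n ∈ ({n₁, n₂, n₃} : Finset ℤ), distNearestInt ((n : ℝ) * x - φ n) ≤ ε} :=
    ⟨0, fun y hy => hy.1⟩
  calc angularKronecker {n₁, n₂, n₃} ≤ ε := csInf_le hbdd hmem
    _ < 1/3 := hε13
end
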